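/- arXiv:1404.6799 — 2 statements merged into one kernel-verified Lean document; each statement's English description precedes it below -/
import Mathlib

section
/- Let n,k ∈ ℕ with 2 ≤ k ≤ n−2, let 𝒫=(P,w) be a weighted pseudostar of kind (n,k) with L(P)=[n], and let ℋ be the hierarchy over [n] associated to P, with edges e_J for J ∈ ℋ as in the definition. Then for every J ∈ ℋ and every k-subset I of [n], the minimal subtree of P containing I contains the edge e_J if and only if I∩J ≠ ∅ and I ⊄ J. -/
open scoped Classical
open Finset

noncomputable section

/-- The total weight of the minimal subtree of a tree `G` spanning the vertex set `A`:
the sum of the weights of those edges of `G` that lie on every walk between some pair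
of vertices of `A` (in a tree, these are exactly the edges of the minimal subtree
containing `A`). -/
def treeWeight {V : Type} [Fintype V] (G : SimpleGraph V) (w : Sym2 V → ℝ)
    (A : Finset V) : ℝ :=
  ∑ e ∈ (Finset.univ : Finset (Sym2 V)),
    if e ∈ G.edgeSet ∧ ∃ a ∈ A, ∃ b ∈ A, ∀ p : G.Walk a b, e ∈ p.edges then w e else 0

/-- A weighted finite tree whose set of leaves is (the image of) `α`. -/
structure WTree (α : Type) [Fintype α] : Type 1 where
  V : Type
  fintypeV : Fintype V
  G : SimpleGraph V
  isTree : G.IsTree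
  w : Sym2 V → ℝ
  label : α → V
  label_inj : Function.Injective label
  leaf_iff : ∀ v : V, (G.neighborSet v).ncard = 1 ↔ v ∈ Set.range label

attribute [instance] WTree.fintypeV

namespace WTree

variable {α : Type} [Fintype α]

/-- The `k`-weight `D_I` : the weight of the minimal subtree containing the leaves
labelled by `I`. -/
def D (T : WTree α) (I : Finset α) : ℝ := treeWeight T.G T.w (I.image T.label)

/-- A node is a vertex of degree `> 2`. -/
def IsNode (T : WTree α) (v : T.V) : Prop := 2 < (T.G.neighborSet v).ncard

/-- Two vertices are neighbours if the path between them contains exactly one node. -/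
def Neighbours (T : WTree α) (a b : T.V) : Prop :=
  a ≠ b ∧ ∃ p : T.G.Walk a b, p.IsPath ∧
    (p.support.toFinset.filter (fun v => T.IsNode v)).card = 1

/-- Two leaves (given by their labels) are neighbours. -/
def LeafNbr (T : WTree α) (i j : α) : Prop := T.Neighbours (T.label i) (T.label j)

/-- A set of leaves is a cherry if any two of its elements are neighbours. -/
def IsCherry (T : WTree α) (C : Finset α) : Prop :=
  ∀ i ∈ C, ∀ j ∈ C, i ≠ j → T.LeafNbr i j

/-- A cherry is complete if it is not strictly contained in another cherry. -/
def IsCompleteCherry (T : WTree α) (C : Finset α) : Prop :=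
  T.IsCherry C ∧ ∀ C' : Finset α, T.IsCherry C' → ¬ C ⊂ C'

/-- Buneman's index `⟨i,j|l,m⟩` : in the subtree spanned by the four leaves, `i,j` are
neighbours, `l,m` are neighbours and `i,l` are not neighbours; equivalently, the path
from `i` to `j` is disjoint from the path from `l` to `m`. -/
def Buneman (T : WTree α) (i j l m : α) : Prop :=
  i ≠ j ∧ l ≠ m ∧
  ∃ (p : T.G.Walk (T.label i) (T.label j)) (q : T.G.Walk (T.label l) (T.label m)),
    p.IsPath ∧ q.IsPath ∧ ∀ v, v ∈ p.support → v ∉ q.support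

/-- The edge `e` lies on the (unique) path between `a` and `b`. -/
def edgeBetween (T : WTree α) (a b : T.V) (e : Sym2 T.V) : Prop :=
  ∀ p : T.G.Walk a b, e ∈ p.edges

/-- The set of leaf labels lying on the `u`-side of the edge `{u,v}`. -/
def sideLeaves (T : WTree α) (u v : T.V) : Finset α :=
  Finset.univ.filter fun i => T.edgeBetween (T.label i) v s(u, v)

/-- A pseudostar of kind `(n,k)` (with `n = #α`): every edge divides the set of leaves
into two sets such that at least one of them has cardinality `≥ k`. -/
def IsPseudostar (T : WTree α) (k : ℕ) : Prop :=
  ∀ u v : T.V, T.G.Adj u v →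
    k ≤ (T.sideLeaves u v).card ∨ k ≤ (T.sideLeaves v u).card

/-- A tree is essential if it has no vertices of degree 2. -/
def IsEssential (T : WTree α) : Prop := ∀ v : T.V, (T.G.neighborSet v).ncard ≠ 2

/-- The edge `e` lies on the twig of the leaf labelled `i`, i.e. on the path from that
leaf to the nearest node (equivalently, on the path from the leaf to every node). -/
def OnTwig (T : WTree α) (i : α) (e : Sym2 T.V) : Prop :=
  ∀ w : T.V, T.IsNode w → T.edgeBetween (T.label i) w e

/-- An edge is internal if it is an edge of the tree lying on no twig. -/
def IsInternalEdge (T : WTree α) (e : Sym2 T.V) : Prop :=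
  e ∈ T.G.edgeSet ∧ ∀ i : α, ¬ T.OnTwig i e

/-- All internal edges have nonzero weight. -/
def InternalNonzero (T : WTree α) : Prop := ∀ e, T.IsInternalEdge e → T.w e ≠ 0

/-- All edges have positive weight. -/
def PositiveWeighted (T : WTree α) : Prop := ∀ e ∈ T.G.edgeSet, 0 < T.w e

/-- All weights are nonnegative and all internal edges have positive weight. -/
def NNIPWeighted (T : WTree α) : Prop :=
  (∀ e ∈ T.G.edgeSet, 0 ≤ T.w e) ∧ ∀ e, T.IsInternalEdge e → 0 < T.w e

/-- The edge `e` belongs to the minimal subtree containing the leaves labelled by `I`. -/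
def inMinSubtree (T : WTree α) (I : Finset α) (e : Sym2 T.V) : Prop :=
  e ∈ T.G.edgeSet ∧ ∃ a ∈ I, ∃ b ∈ I, T.edgeBetween (T.label a) (T.label b) e

end WTree

/-- Isomorphism of weighted trees fixing the labelled leaves. -/
def WIso {α : Type} [Fintype α] (T T' : WTree α) : Prop :=
  ∃ φ : T.V ≃ T'.V,
    (∀ a b : T.V, T.G.Adj a b ↔ T'.G.Adj (φ a) (φ b)) ∧
    (∀ a b : T.V, T.G.Adj a b → T.w s(a, b) = T'.w s(φ a, φ b)) ∧
    ∀ i : α, φ (T.label i) = T'.label i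

/-- A family indexed by the `k`-subsets of `α` is l-treelike if it is realized by a
weighted tree with leaf set `α`. -/
def IsLTreelike (α : Type) [Fintype α] (k : ℕ) (D : Finset α → ℝ) : Prop :=
  ∃ T : WTree α, ∀ I : Finset α, I.card = k → T.D I = D I

/-- p-l-treelike : realized by a positive-weighted tree with leaf set `α`. -/
def IsPLTreelike (α : Type) [Fintype α] (k : ℕ) (D : Finset α → ℝ) : Prop :=
  ∃ T : WTree α, T.PositiveWeighted ∧ ∀ I : Finset α, I.card = k → T.D I = D I

/-- nn-ip-l-treelike : realized by a nonnegative-weighted, internal-positive-weighted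
tree with leaf set `α`. -/
def IsNNIPLTreelike (α : Type) [Fintype α] (k : ℕ) (D : Finset α → ℝ) : Prop :=
  ∃ T : WTree α, T.NNIPWeighted ∧ ∀ I : Finset α, I.card = k → T.D I = D I

/-- p-treelike : realized on a subset of the vertices of a positive-weighted tree. -/
def IsPTreelike (n k : ℕ) (D : Finset (Fin n) → ℝ) : Prop :=
  ∃ (V : Type) (_ : Fintype V) (G : SimpleGraph V) (w : Sym2 V → ℝ) (f : Fin n → V),
    G.IsTree ∧ Function.Injective f ∧ (∀ e ∈ G.edgeSet, 0 < w e) ∧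
    ∀ I : Finset (Fin n), I.card = k → treeWeight G w (I.image f) = D I


/-- A hierarchy: a set system in which any two members intersect in `∅` or in one
of the two. -/
def IsHierarchy {β : Type} (ℋ : Set (Finset β)) : Prop :=
  ∀ H ∈ ℋ, ∀ H' ∈ ℋ, H ∩ H' = ∅ ∨ H ∩ H' = H ∨ H ∩ H' = H'

/-- The element `Σ_{H ∈ ℋ, H ∩ A ≠ ∅, H ⊉ A} H` of the free ℤ-module on the clusters. -/
def hsum {β : Type} (ℋ : Set (Finset β)) (A : Finset β) : Finset β →₀ ℤ :=
  ∑ᶠ H ∈ {H : Finset β | H ∈ ℋ ∧ (H ∩ A).Nonempty ∧ ¬ A ⊆ H}, Finsupp.single H 1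

/-- `m` is a minimal cluster of `ℋ` containing `t`. -/
def IsMinCluster {β : Type} (ℋ : Set (Finset β)) (t : β) (m : Finset β) : Prop :=
  m ∈ ℋ ∧ t ∈ m ∧ ∀ H ∈ ℋ, t ∈ H → ¬ H ⊂ m

/-- `M` is a maximal cluster of `ℋ` containing `t`. -/
def IsMaxCluster {β : Type} (ℋ : Set (Finset β)) (t : β) (M : Finset β) : Prop :=
  M ∈ ℋ ∧ t ∈ M ∧ ∀ H ∈ ℋ, t ∈ H → ¬ M ⊂ H

/-- `M` is a maximal cluster of `ℋ` containing the cluster `J`. -/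
def IsMaxClusterContaining {β : Type} (ℋ : Set (Finset β)) (J M : Finset β) : Prop :=
  M ∈ ℋ ∧ J ⊆ M ∧ ∀ H ∈ ℋ, J ⊆ H → ¬ M ⊂ H

section FamHierarchy

variable (n k : ℕ) (D : Finset (Fin n) → ℝ)

/-- `𝒞⁰` : the sets `Z` of cardinality `≥ 2` such that for all `i,j ∈ Z` the quantity
`D_{i,X} - D_{j,X}` does not depend on `X ∈ ([n] - {i,j} choose k-1)`. -/
def famC0 : Set (Finset (Fin n)) :=
  {Z | 2 ≤ Z.card ∧ ∀ i ∈ Z, ∀ j ∈ Z, ∀ X X' : Finset (Fin n),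
    X.card = k - 1 → i ∉ X → j ∉ X → X'.card = k - 1 → i ∉ X' → j ∉ X' →
    D (insert i X) - D (insert j X) = D (insert i X') - D (insert j X')}

/-- `𝒞̲⁰` : the maximal elements of `𝒞⁰`. -/
def famMaxC0 : Set (Finset (Fin n)) :=
  {Z | Z ∈ famC0 n k D ∧ ∀ Z' ∈ famC0 n k D, ¬ Z ⊂ Z'}

/-- Condition (b) in the definition of `𝒢^s` : there are `R, S` in
`([n]-{i,j,x,y} choose k-2)` with `D_{ijR} + D_{xyR} ≠ D_{ixR} + D_{jyR}` and
`D_{ijS} + D_{xyS} ≠ D_{iyS} + D_{jxS}`. -/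
def famCondB (i j x y : Fin n) : Prop :=
  ∃ R S : Finset (Fin n),
    R.card = k - 2 ∧ i ∉ R ∧ j ∉ R ∧ x ∉ R ∧ y ∉ R ∧
    S.card = k - 2 ∧ i ∉ S ∧ j ∉ S ∧ x ∉ S ∧ y ∉ S ∧
    D (insert i (insert j R)) + D (insert x (insert y R)) ≠
      D (insert i (insert x R)) + D (insert j (insert y R)) ∧
    D (insert i (insert j S)) + D (insert x (insert y S)) ≠
      D (insert i (insert y S)) + D (insert j (insert x S))

/-- Condition (b) in the definition of `𝒞^s` (with the roles of the pairs permuted). -/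
def famCondB' (i j x y : Fin n) : Prop :=
  ∃ R S : Finset (Fin n),
    R.card = k - 2 ∧ i ∉ R ∧ j ∉ R ∧ x ∉ R ∧ y ∉ R ∧
    S.card = k - 2 ∧ i ∉ S ∧ j ∉ S ∧ x ∉ S ∧ y ∉ S ∧
    D (insert i (insert x R)) + D (insert j (insert y R)) ≠
      D (insert i (insert j R)) + D (insert x (insert y R)) ∧
    D (insert i (insert x S)) + D (insert j (insert y S)) ≠
      D (insert i (insert y S)) + D (insert j (insert x S))

/-- `𝒢⁰`. -/
def famG0 : Set (Finset (Fin n)) :=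
  {Z | Z ∈ famMaxC0 n k D ∧ Z.card ≤ n - k ∧
    ∀ i ∈ Z, ∀ j ∈ Z, ∀ x y : Fin n, x ∉ Z → y ∉ Z →
      (({i, j} : Finset (Fin n)) ∈ famMaxC0 n k D ∧
        ({x, y} : Finset (Fin n)) ∈ famMaxC0 n k D) ∨
      famCondB n k D i j x y}

/-- `𝒞^s`, relative to the surviving set `N = [n]^s`. -/
def famCs (N : Finset (Fin n)) : Set (Finset (Fin n)) :=
  {Z | Z ⊆ N ∧ 2 ≤ Z.card ∧ ∀ i ∈ Z, ∀ j ∈ Z, ∀ x y : Fin n,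
    x ∈ N → y ∈ N → x ≠ i → x ≠ j → y ≠ i → y ≠ j →
    ¬ (({i, x} : Finset (Fin n)) ∈ famMaxC0 n k D ∧
        ({j, y} : Finset (Fin n)) ∈ famMaxC0 n k D) ∧
    ¬ famCondB' n k D i j x y}

/-- `𝒞̲^s` : the maximal elements of `𝒞^s`. -/
def famMaxCs (N : Finset (Fin n)) : Set (Finset (Fin n)) :=
  {Z | Z ∈ famCs n k D N ∧ ∀ Z' ∈ famCs n k D N, ¬ Z ⊂ Z'}

/-- The chain relation expressing that `y0` descends from `y` through the history
`hs = [𝒢⁰, …, 𝒢^{s-1}]` of pruned families. -/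
def descChain : List (Set (Finset (Fin n))) → Fin n → Fin n → Prop
  | [], y0, y => y0 = y
  | G :: rest, y0, y =>
      ∃ y1 : Fin n, (y1 = y0 ∨ ∃ Z ∈ G, y0 ∈ Z ∧ y1 ∈ Z) ∧ descChain rest y1 y

/-- `∂Z` : the set of elements of `[n]` descending from an element of `Z`. -/
def bdry (hs : List (Set (Finset (Fin n)))) (Z : Finset (Fin n)) : Finset (Fin n) :=
  Finset.univ.filter fun y0 => ∃ ys ∈ Z, descChain n hs y0 ys

/-- `𝒢^s` (for `s ≥ 1`), relative to the surviving set `N = [n]^s` and the history `hs`. -/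
def famGs (N : Finset (Fin n)) (hs : List (Set (Finset (Fin n)))) :
    Set (Finset (Fin n)) :=
  {Z | Z ∈ famMaxCs n k D N ∧ (bdry n hs Z).card ≤ n - k ∧
    ∀ i ∈ Z, ∀ j ∈ Z, ∀ x y : Fin n, x ∉ Z → y ∉ Z →
      (({i, j} : Finset (Fin n)) ∈ famMaxC0 n k D ∧
        ({x, y} : Finset (Fin n)) ∈ famMaxC0 n k D) ∨
      famCondB n k D i j x y}

/-- The pair `([n]^s, [𝒢⁰, …, 𝒢^{s-1}])`. -/
def famStage : ℕ → Finset (Fin n) × List (Set (Finset (Fin n)))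
  | 0 => (Finset.univ, [])
  | s + 1 =>
      let p := famStage s
      let G := if s = 0 then famG0 n k D else famGs n k D p.1 p.2
      (p.1.filter fun y => ∀ Z ∈ G, y ∈ Z → ∀ z ∈ Z, y ≤ z, p.2 ++ [G])

/-- `𝒢^s`. -/
def famGAt (s : ℕ) : Set (Finset (Fin n)) :=
  if s = 0 then famG0 n k D
  else famGs n k D (famStage n k D s).1 (famStage n k D s).2

/-- The hierarchy over `[n]` associated to the family `{D_I}`. -/
def famHier : Set (Finset (Fin n)) :=
  {A | ∃ s : ℕ, ∃ Z ∈ famGAt n k D s, A = bdry n (famStage n k D s).2 Z}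

/-- Condition (i): if `ℋ` covers `[n]` then the number of maximal clusters is not 2. -/
def CondI {n : ℕ} (ℋ : Set (Finset (Fin n))) : Prop :=
  (∀ x : Fin n, ∃ H ∈ ℋ, x ∈ H) →
    {H | H ∈ ℋ ∧ ∀ H' ∈ ℋ, ¬ H ⊂ H'}.ncard ≠ 2

/-- Condition (ii): for `q ∈ {1,…,n-1}`, `s ∈ {1, k-1}`, `W, W' ∈ ([n] choose s)`,
the sum `Σ_i (D_{W Z_i} - D_{W' Z_i})` takes the same value on all choices of the
`Z_i ∈ ([n]-W-W' choose k-s)` on which the corresponding element of the free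
ℤ-module `⊕_{H ∈ ℋ} ℤ H` is the same. -/
def CondII (n k : ℕ) (D : Finset (Fin n) → ℝ) (ℋ : Set (Finset (Fin n))) : Prop :=
  ∀ q : ℕ, 1 ≤ q → q ≤ n - 1 → ∀ s : ℕ, s = 1 ∨ s = k - 1 →
    ∀ W W' : Finset (Fin n), W.card = s → W'.card = s →
    ∀ Z Z' : ℕ → Finset (Fin n),
      (∀ i < q, (Z i).card = k - s ∧ Disjoint (Z i) W ∧ Disjoint (Z i) W') →
      (∀ i < q, (Z' i).card = k - s ∧ Disjoint (Z' i) W ∧ Disjoint (Z' i) W') →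
      (∑ i ∈ Finset.range q, (hsum ℋ (W ∪ Z i) - hsum ℋ (W' ∪ Z i)) =
        ∑ i ∈ Finset.range q, (hsum ℋ (W ∪ Z' i) - hsum ℋ (W' ∪ Z' i))) →
      (∑ i ∈ Finset.range q, (D (W ∪ Z i) - D (W' ∪ Z i)) =
        ∑ i ∈ Finset.range q, (D (W ∪ Z' i) - D (W' ∪ Z' i)))

end FamHierarchy

section Pruning

namespace WTree

variable {α : Type} [Fintype α]

/-- The subtree of `T` induced on the vertex set `S` (as a graph on the ambient
vertex set). Pruning a cherry, i.e. contracting the twigs of its leaves, is realized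
by deleting the vertices of those twigs except the stalk. -/
def restrictG (T : WTree α) (S : Set T.V) : SimpleGraph T.V where
  Adj a b := T.G.Adj a b ∧ a ∈ S ∧ b ∈ S
  symm := ⟨fun _ _ h => ⟨h.1.symm, h.2.2, h.2.1⟩⟩
  loopless := ⟨fun a h => T.G.loopless.irrefl a h.1⟩

/-- Degree in the pruned tree. -/
def rdeg (T : WTree α) (S : Set T.V) (v : T.V) : ℕ :=
  ((T.restrictG S).neighborSet v).ncard

/-- Leaf of the pruned tree. -/
def rleaf (T : WTree α) (S : Set T.V) (v : T.V) : Prop := v ∈ S ∧ T.rdeg S v = 1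

/-- Node (vertex of degree `> 2`) of the pruned tree. -/
def rnode (T : WTree α) (S : Set T.V) (v : T.V) : Prop := v ∈ S ∧ 2 < T.rdeg S v

/-- Neighbours in the pruned tree: the path between them contains exactly one node. -/
def rnbr (T : WTree α) (S : Set T.V) (a b : T.V) : Prop :=
  a ≠ b ∧ ∃ p : (T.restrictG S).Walk a b, p.IsPath ∧
    (p.support.toFinset.filter (fun v => T.rnode S v)).card = 1

/-- Cherry of the pruned tree: a set of leaves any two of which are neighbours. -/
def rCherry (T : WTree α) (S : Set T.V) (C : Set T.V) : Prop :=
  (∀ v ∈ C, T.rleaf S v) ∧ ∀ a ∈ C, ∀ b ∈ C, a ≠ b → T.rnbr S a b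

/-- Complete cherry of the pruned tree. -/
def rCompleteCherry (T : WTree α) (S : Set T.V) (C : Set T.V) : Prop :=
  T.rCherry S C ∧ ∀ C' : Set T.V, T.rCherry S C' → ¬ C ⊂ C'

/-- The stalk of a cherry: the node lying on the path from any element of the cherry
to any node. -/
def rStalk (T : WTree α) (S : Set T.V) (C : Set T.V) (v : T.V) : Prop :=
  T.rnode S v ∧ ∀ a ∈ C, ∀ w : T.V, T.rnode S w →
    ∀ p : (T.restrictG S).Walk a w, p.IsPath → v ∈ p.support

/-- `v` is on the twig of the leaf `ℓ` in the pruned tree: `v` is not a node and lies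
on the path from `ℓ` to every node. -/
def rTwigVert (T : WTree α) (S : Set T.V) (ℓ v : T.V) : Prop :=
  v ∈ S ∧ ¬ T.rnode S v ∧ ∀ w : T.V, T.rnode S w →
    ∀ p : (T.restrictG S).Walk ℓ w, p.IsPath → v ∈ p.support

/-- The vertex set obtained by pruning the cherry `C` (contracting the twigs of its
leaves). -/
def pruneCherry (T : WTree α) (S : Set T.V) (C : Set T.V) : Set T.V :=
  S \ {v | ∃ ℓ ∈ C, T.rTwigVert S ℓ v}

/-- A good cherry: a complete cherry whose stalk is a leaf of the tree obtained by
pruning it. -/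
def rGoodCherry (T : WTree α) (S : Set T.V) (C : Set T.V) : Prop :=
  T.rCompleteCherry S C ∧ ∃ v : T.V, T.rStalk S C v ∧ T.rleaf (T.pruneCherry S C) v

/-- The leaf labelled `x` (of the original tree) descends from the leaf `y` of the
pruned tree: the path in the original tree from `x` to `y` contains no leaf of the
pruned tree other than `y`. -/
def descLeaf (T : WTree α) (S : Set T.V) (x : α) (y : T.V) : Prop :=
  T.rleaf S y ∧ ∀ p : T.G.Walk (T.label x) y, p.IsPath →
    ∀ v ∈ p.support, T.rleaf S v → v = y

/-- `∂C` : the set of labels descending from an element of `C`. -/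
def bdryV (T : WTree α) (S : Set T.V) (C : Set T.V) : Finset α :=
  Finset.univ.filter fun x => ∃ y ∈ C, T.descLeaf S x y

/-- One pruning step: prune all good cherries `C` with `#∂C ≤ r`. -/
def pruneStage (T : WTree α) (r : ℕ) (S : Set T.V) : Set T.V :=
  S \ {v | ∃ C : Set T.V, T.rGoodCherry S C ∧ (T.bdryV S C).card ≤ r ∧
    ∃ ℓ ∈ C, T.rTwigVert S ℓ v}

/-- The vertex set of `P^s`. -/
def stageSet (T : WTree α) (r : ℕ) : ℕ → Set T.V
  | 0 => Set.univ
  | s + 1 => T.pruneStage r (T.stageSet r s)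

/-- The hierarchy associated to the pseudostar `T` (with `r = n - k`): the sets `∂C`
for `C` a good cherry of some `P^s` with `#∂C ≤ r`; when `L(P^s)` is the union of two
complete cherries both with `#∂C_i ≤ r`, only the one whose `∂` contains the minimum
of `∂C₁ ∪ ∂C₂` is included. -/
def psHier [LinearOrder α] (T : WTree α) (r : ℕ) : Set (Finset α) :=
  {A | ∃ (s : ℕ) (C : Set T.V),
    T.rGoodCherry (T.stageSet r s) C ∧
    (T.bdryV (T.stageSet r s) C).card ≤ r ∧
    A = T.bdryV (T.stageSet r s) C ∧
    ∀ C₂ : Set T.V, T.rCompleteCherry (T.stageSet r s) C₂ →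
      (∀ v : T.V, T.rleaf (T.stageSet r s) v ↔ v ∈ C ∪ C₂) →
      (T.bdryV (T.stageSet r s) C₂).card ≤ r →
      ∃ m ∈ T.bdryV (T.stageSet r s) C,
        ∀ x ∈ T.bdryV (T.stageSet r s) C ∪ T.bdryV (T.stageSet r s) C₂, m ≤ x}

/-- The edge `e` belongs to the twig of the leaf `v` in the pruned tree on `S`. -/
def rOnTwigEdge (T : WTree α) (S : Set T.V) (v : T.V) (e : Sym2 T.V) : Prop :=
  e ∈ (T.restrictG S).edgeSet ∧ ∀ w : T.V, T.rnode S w →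
    ∀ p : (T.restrictG S).Walk v w, p.IsPath → e ∈ p.edges

end WTree

end Pruning

section AuxDev


namespace SGAux

variable {V : Type} {G : SimpleGraph V}

/-- Separation lemma: if `A` is closed under adjacency except through `z`,
then every walk from `A` to outside `A` passes through `z`. -/
lemma sep_walk {A : Set V} {z : V}
    (hA : ∀ x ∈ A, ∀ y, G.Adj x y → y ∈ A ∨ y = z) :
    ∀ {a b : V}, a ∈ A → b ∉ A → ∀ q : G.Walk a b, z ∈ q.support := by
  intro a b ha hb q
  induction q with
  | nil => exact absurd ha hb
  | @cons u c w hadj q ih =>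
    rcases hA _ ha _ hadj with hc | hc
    · exact List.mem_cons_of_mem _ (ih hc hb)
    · subst hc; exact List.mem_cons_of_mem _ q.start_mem_support

/-- First crossing: a walk from outside `P` to inside `P` has a crossing edge. -/
lemma first_cross {P : Set V} :
    ∀ {a b : V}, a ∉ P → b ∈ P → ∀ q : G.Walk a b,
      ∃ x w₁, G.Adj x w₁ ∧ x ∉ P ∧ w₁ ∈ P ∧ x ∈ q.support ∧ w₁ ∈ q.support := by
  intro a b ha hb q
  induction q with
  | nil => exact absurd hb ha
  | @cons u c w hadj q ih =>
    by_cases hc : c ∈ P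
    · exact ⟨u, c, hadj, ha, hc, List.mem_cons_self,
        List.mem_cons_of_mem _ q.start_mem_support⟩
    · obtain ⟨x, w₁, h1, h2, h3, h4, h5⟩ := ih hc hb
      exact ⟨x, w₁, h1, h2, h3, List.mem_cons_of_mem _ h4, List.mem_cons_of_mem _ h5⟩

/-- In a path, take and drop parts meet only at the split point. -/
lemma meet_take_drop {a b u x : V} {p : G.Walk a b} (hp : p.IsPath) (hu : u ∈ p.support)
    (hx1 : x ∈ (p.takeUntil u hu).support) (hx2 : x ∈ (p.dropUntil u hu).support) :
    x = u := by
  by_contra hxu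
  have hspec := p.take_spec hu
  have hnd : p.support.Nodup := hp.support_nodup
  rw [← hspec, SimpleGraph.Walk.support_append] at hnd
  have hx2' : x ∈ (p.dropUntil u hu).support.tail := by
    have hc := (p.dropUntil u hu).support_eq_cons
    rw [hc] at hx2
    rcases List.mem_cons.1 hx2 with h | h
    · exact absurd h hxu
    · exact h
  exact (List.disjoint_of_nodup_append hnd) hx1 hx2'

/-- If the endpoint `b` appears in `takeUntil u`, then `u = b`. -/
lemma endpt_take {a b u : V} {p : G.Walk a b} (hp : p.IsPath) (hu : u ∈ p.support)
    (hb : b ∈ (p.takeUntil u hu).support) : u = b :=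
  (meet_take_drop hp hu hb (p.dropUntil u hu).end_mem_support).symm

end SGAux

namespace SGAux

variable {V : Type} {G : SimpleGraph V}

open SimpleGraph Walk

lemma unique_path (hT : G.IsTree) {a b : V} (p q : G.Walk a b)
    (hp : p.IsPath) (hq : q.IsPath) : p = q := by
  obtain ⟨r, -, hr⟩ := hT.existsUnique_path a b
  rw [hr p hp, hr q hq]

/-- An interior vertex of a path has two distinct neighbours on the path. -/
lemma adj2 {a b u : V} (p : G.Walk a b) (hp : p.IsPath) (hu : u ∈ p.support)
    (hua : u ≠ a) (hub : u ≠ b) :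
    ∃ n₁ n₂ : V, n₁ ≠ n₂ ∧ G.Adj u n₁ ∧ G.Adj u n₂ ∧ n₁ ∈ p.support ∧ n₂ ∈ p.support := by
  set t := p.takeUntil u hu with ht
  set d := p.dropUntil u hu with hd
  obtain ⟨n₂, hadj₂, d', hd'⟩ := Walk.exists_eq_cons_of_ne hub d
  obtain ⟨n₁, hadj₁, t', ht'⟩ := Walk.exists_eq_cons_of_ne hua t.reverse
  have hn₁t : n₁ ∈ t.support := by
    have : n₁ ∈ t.reverse.support := by rw [ht']; exact List.mem_cons_of_mem _ t'.start_mem_support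
    rwa [Walk.support_reverse, List.mem_reverse] at this
  have hn₂d : n₂ ∈ d.support := by rw [hd']; exact List.mem_cons_of_mem _ d'.start_mem_support
  have hn₁u : n₁ ≠ u := by
    intro hcontra
    have htp : t.reverse.IsPath := (Walk.isPath_reverse_iff t).2 (hp.takeUntil hu)
    rw [ht'] at htp
    have := htp.support_nodup
    rw [Walk.support_cons] at this
    exact (List.nodup_cons.1 this).1 (hcontra ▸ t'.start_mem_support)
  have hn₂u : n₂ ≠ u := by
    intro hcontra
    have hdp : d.IsPath := hp.dropUntil hu
    rw [hd'] at hdp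
    have := hdp.support_nodup
    rw [Walk.support_cons] at this
    exact (List.nodup_cons.1 this).1 (hcontra ▸ d'.start_mem_support)
  refine ⟨n₁, n₂, ?_, hadj₁, hadj₂, p.support_takeUntil_subset hu hn₁t,
    p.support_dropUntil_subset hu hn₂d⟩
  intro hcontra
  exact hn₁u (meet_take_drop hp hu hn₁t (hcontra ▸ hn₂d))

end SGAux

namespace SGAux

variable {V : Type} {G : SimpleGraph V}

open SimpleGraph Walk

lemma edgeBetween_iff_not_reach {x₀ y₀ a b : V} (hxy : G.Adj x₀ y₀) :
    (∀ p : G.Walk a b, s(x₀, y₀) ∈ p.edges) ↔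
      ¬(G.deleteEdges {s(x₀, y₀)}).Reachable a b := by
  constructor
  · intro h hr
    obtain ⟨q⟩ := hr
    have hsub : ∀ f ∈ q.edges, f ∈ G.edgeSet := fun f hf =>
      (SimpleGraph.edgeSet_subset_edgeSet.2 (SimpleGraph.deleteEdges_le _)) (q.edges_subset_edgeSet hf)
    have := h (q.transfer G hsub)
    rw [Walk.edges_transfer] at this
    have := q.edges_subset_edgeSet this
    simp [SimpleGraph.edgeSet_deleteEdges] at this
  · intro h p
    by_contra he
    exact h ⟨p.toDeleteEdges {s(x₀, y₀)} (fun f hf => by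
      simp only [Set.mem_singleton_iff]
      exact fun hfe => he (hfe ▸ hf))⟩

lemma side_step {x₀ y₀ : V} {a b : V} (w : G.Walk a b)
    (hb : (G.deleteEdges {s(x₀, y₀)}).Reachable b x₀ ∨
      (G.deleteEdges {s(x₀, y₀)}).Reachable b y₀) :
    (G.deleteEdges {s(x₀, y₀)}).Reachable a x₀ ∨
      (G.deleteEdges {s(x₀, y₀)}).Reachable a y₀ := by
  induction w with
  | nil => exact hb
  | @cons a c d hadj q ih =>
    rcases em (s(a, c) = s(x₀, y₀)) with hec | hec
    · rw [Sym2.eq_iff] at hec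
      rcases hec with ⟨rfl, rfl⟩ | ⟨rfl, rfl⟩
      · exact Or.inl (Reachable.refl _)
      · exact Or.inr (Reachable.refl _)
    · have hadj' : (G.deleteEdges {s(x₀, y₀)}).Adj a c := by
        rw [SimpleGraph.deleteEdges_adj]
        exact ⟨hadj, by simpa using hec⟩
      rcases ih hb with h | h
      · exact Or.inl (hadj'.reachable.trans h)
      · exact Or.inr (hadj'.reachable.trans h)

lemma side_total (hc : G.Connected) {x₀ y₀ : V} (u : V) :
    (G.deleteEdges {s(x₀, y₀)}).Reachable u x₀ ∨
      (G.deleteEdges {s(x₀, y₀)}).Reachable u y₀ := by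
  obtain ⟨w⟩ := hc.preconnected u x₀
  exact side_step w (Or.inl (Reachable.refl _))

lemma bridge_not_reach (hT : G.IsTree) {x₀ y₀ : V} (hxy : G.Adj x₀ y₀) :
    ¬(G.deleteEdges {s(x₀, y₀)}).Reachable x₀ y₀ := by
  have hxe : s(x₀, y₀) ∈ G.edgeSet := hxy
  have hb := (SimpleGraph.isAcyclic_iff_forall_edge_isBridge.1 hT.IsAcyclic) hxe
  rw [SimpleGraph.isBridge_iff] at hb
  simpa [SimpleGraph.deleteEdges] using hb

end SGAux

end AuxDev

section WAux

namespace WTree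

open SimpleGraph Walk SGAux

variable {α : Type} [Fintype α] {T : WTree α}

lemma restrictG_le (S : Set T.V) : T.restrictG S ≤ T.G := by intro a b h; exact h.1

lemma restrict_adj {S : Set T.V} {a b : T.V} :
    (T.restrictG S).Adj a b ↔ T.G.Adj a b ∧ a ∈ S ∧ b ∈ S := Iff.rfl

/-- Transfer a restricted walk up to `G`. -/
def upWalk {S : Set T.V} {a b : T.V} (q : (T.restrictG S).Walk a b) : T.G.Walk a b :=
  q.transfer T.G (fun f hf =>
    SimpleGraph.edgeSet_subset_edgeSet.2 (restrictG_le S) (q.edges_subset_edgeSet hf))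

@[simp] lemma upWalk_support {S : Set T.V} {a b : T.V} (q : (T.restrictG S).Walk a b) :
    (upWalk q).support = q.support := Walk.support_transfer _ _

@[simp] lemma upWalk_edges {S : Set T.V} {a b : T.V} (q : (T.restrictG S).Walk a b) :
    (upWalk q).edges = q.edges := Walk.edges_transfer _ _

lemma upWalk_isPath {S : Set T.V} {a b : T.V} {q : (T.restrictG S).Walk a b}
    (hq : q.IsPath) : (upWalk q).IsPath := hq.transfer _

/-- Transfer a `G`-walk with support in `S` down to the restricted graph. -/
def downWalk {S : Set T.V} {a b : T.V} (p : T.G.Walk a b)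
    (hp : ∀ u ∈ p.support, u ∈ S) : (T.restrictG S).Walk a b :=
  p.transfer (T.restrictG S) (by
    intro f hf
    induction f with
    | h x y =>
      exact (restrict_adj).2 ⟨p.adj_of_mem_edges hf,
        hp _ (p.fst_mem_support_of_mem_edges hf), hp _ (p.snd_mem_support_of_mem_edges hf)⟩)

@[simp] lemma downWalk_support {S : Set T.V} {a b : T.V} (p : T.G.Walk a b)
    (hp : ∀ u ∈ p.support, u ∈ S) : (downWalk p hp).support = p.support :=
  Walk.support_transfer _ _

@[simp] lemma downWalk_edges {S : Set T.V} {a b : T.V} (p : T.G.Walk a b)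
    (hp : ∀ u ∈ p.support, u ∈ S) : (downWalk p hp).edges = p.edges :=
  Walk.edges_transfer _ _

lemma downWalk_isPath {S : Set T.V} {a b : T.V} {p : T.G.Walk a b}
    {hp : ∀ u ∈ p.support, u ∈ S} (h : p.IsPath) : (downWalk p hp).IsPath := h.transfer _

lemma rdeg_mono {S S' : Set T.V} (h : S' ⊆ S) (u : T.V) : T.rdeg S' u ≤ T.rdeg S u :=
  Set.ncard_le_ncard (fun y hy => ⟨hy.1, h hy.2.1, h hy.2.2⟩) (Set.toFinite _)

lemma rdeg_le_gdeg (S : Set T.V) (u : T.V) : T.rdeg S u ≤ (T.G.neighborSet u).ncard :=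
  Set.ncard_le_ncard (fun y hy => hy.1) (Set.toFinite _)

lemma two_le_rdeg {S : Set T.V} {u n₁ n₂ : T.V} (h1 : (T.restrictG S).Adj u n₁)
    (h2 : (T.restrictG S).Adj u n₂) (hne : n₁ ≠ n₂) : 2 ≤ T.rdeg S u := by
  have hsub : ({n₁, n₂} : Set T.V) ⊆ (T.restrictG S).neighborSet u := by
    intro y hy; rcases hy with rfl | rfl
    · exact h1
    · exact h2
  calc 2 = ({n₁, n₂} : Set T.V).ncard := (Set.ncard_pair hne).symm
    _ ≤ _ := Set.ncard_le_ncard hsub (Set.toFinite _)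

lemma three_le_rdeg {S : Set T.V} {u n₁ n₂ n₃ : T.V} (h1 : (T.restrictG S).Adj u n₁)
    (h2 : (T.restrictG S).Adj u n₂) (h3 : (T.restrictG S).Adj u n₃)
    (h12 : n₁ ≠ n₂) (h13 : n₁ ≠ n₃) (h23 : n₂ ≠ n₃) : 3 ≤ T.rdeg S u := by
  have hsub : ({n₁, n₂, n₃} : Set T.V) ⊆ (T.restrictG S).neighborSet u := by
    intro y hy; rcases hy with rfl | rfl | rfl
    · exact h1
    · exact h2
    · exact h3
  have h3c : ({n₁, n₂, n₃} : Set T.V).ncard = 3 :=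
    Set.ncard_eq_three.2 ⟨n₁, n₂, n₃, h12, h13, h23, rfl⟩
  calc 3 = ({n₁, n₂, n₃} : Set T.V).ncard := h3c.symm
    _ ≤ _ := Set.ncard_le_ncard hsub (Set.toFinite _)

lemma rleaf_ne_rnode {S : Set T.V} {a v' : T.V} (ha : T.rleaf S a) (hv : T.rnode S v') :
    a ≠ v' := by
  intro h; subst h
  have h1 := ha.2
  have h2 := hv.2
  unfold rdeg at h1 h2
  omega

lemma rnode_not_rleaf {S : Set T.V} {a : T.V} (ha : T.rleaf S a) (hv : T.rnode S a) :
    False := rleaf_ne_rnode ha hv rfl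

/-- A vertex of `S` which is a leaf of `G` and whose restricted degree is
positive, seen through the entry invariant. -/
lemma rdeg_one_unique {S : Set T.V} {u : T.V} (h : T.rdeg S u = 1) :
    ∃ t, (T.restrictG S).neighborSet u = {t} := Set.ncard_eq_one.1 h

end WTree

end WAux

section WAuxB

namespace WTree

open SimpleGraph Walk SGAux

variable {α : Type} [Fintype α] {T : WTree α}

/-- The structural invariant maintained along the pruning process. -/
structure Inv (T : WTree α) (S : Set T.V) : Prop where
  conn : ∀ a ∈ S, ∀ b ∈ S, ∃ p : T.G.Walk a b, p.IsPath ∧ ∀ u ∈ p.support, u ∈ S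
  deg : ∀ u ∈ S, T.rdeg S u = (T.G.neighborSet u).ncard ∨ T.rdeg S u ≤ 1
  entry : ∀ u, u ∉ S → ∃ z, T.rleaf S z ∧ ∀ b ∈ S, ∀ q : T.G.Walk u b, z ∈ q.support

lemma nonnode_rdeg_le {S : Set T.V} {u : T.V} (h : ¬ T.rnode S u) (hu : u ∈ S) :
    T.rdeg S u ≤ 2 := by
  by_contra hc
  exact h ⟨hu, by omega⟩

/-- Characterization of the twig of a leaf `ℓ` of a cherry with stalk `v'`:
it is the path from `ℓ` to `v'`, without `v'`. -/
lemma twig_char {S : Set T.V} (hI : Inv T S) {C' : Set T.V} (hch : T.rCherry S C')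
    {v' : T.V} (hst : T.rStalk S C' v') {ℓ : T.V} (hℓ : ℓ ∈ C') :
    ∃ p : T.G.Walk ℓ v', p.IsPath ∧ (∀ u ∈ p.support, u ∈ S) ∧
      ∀ u, T.rTwigVert S ℓ u ↔ (u ∈ p.support ∧ u ≠ v') := by
  have hℓS : ℓ ∈ S := (hch.1 ℓ hℓ).1
  have hv'S : v' ∈ S := hst.1.1
  obtain ⟨p, hp, hpS⟩ := hI.conn ℓ hℓS v' hv'S
  refine ⟨p, hp, hpS, fun u => ⟨?_, ?_⟩⟩
  · rintro ⟨huS, hun, hall⟩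
    have hmem := hall v' hst.1 (downWalk p hpS) (downWalk_isPath hp)
    rw [downWalk_support] at hmem
    exact ⟨hmem, fun h => hun (h ▸ hst.1)⟩
  · rintro ⟨hup, huv⟩
    have hunode : ¬ T.rnode S u := by
      intro hnode
      have ht := hp.takeUntil hup
      have htS : ∀ w ∈ (p.takeUntil u hup).support, w ∈ S := fun w hw =>
        hpS _ (p.support_takeUntil_subset hup hw)
      have hvmem := hst.2 ℓ hℓ u hnode (downWalk _ htS) (downWalk_isPath ht)
      rw [downWalk_support] at hvmem
      exact huv (endpt_take hp hup hvmem)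
    refine ⟨hpS u hup, hunode, ?_⟩
    intro w hw q hq
    have hvq := hst.2 ℓ hℓ w hw q hq
    have hqG : (upWalk q).IsPath := upWalk_isPath hq
    have hvqG : v' ∈ (upWalk q).support := by rw [upWalk_support]; exact hvq
    have hteq : (upWalk q).takeUntil v' hvqG = p :=
      unique_path T.isTree _ _ (hqG.takeUntil hvqG) hp
    have h1 : u ∈ ((upWalk q).takeUntil v' hvqG).support := by rw [hteq]; exact hup
    have h2 := (upWalk q).support_takeUntil_subset hvqG h1
    rw [upWalk_support] at h2; exact h2

/-- A twig vertex which is a leaf of the restricted tree is the leaf of the cherry. -/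
lemma twig_rleaf_eq {S : Set T.V} (hI : Inv T S) {C' : Set T.V} (hch : T.rCherry S C')
    {v' : T.V} (hst : T.rStalk S C' v') {ℓ u : T.V} (hℓ : ℓ ∈ C')
    (hu : T.rTwigVert S ℓ u) (huleaf : T.rleaf S u) : u = ℓ := by
  obtain ⟨p, hp, hpS, hchar⟩ := twig_char hI hch hst hℓ
  obtain ⟨hup, huv⟩ := (hchar u).1 hu
  by_contra hne
  obtain ⟨n₁, n₂, h12, ha1, ha2, hn1, hn2⟩ := adj2 p hp hup hne huv
  have h2 : 2 ≤ T.rdeg S u := two_le_rdeg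
    (restrict_adj.2 ⟨ha1, hu.1, hpS _ hn1⟩) (restrict_adj.2 ⟨ha2, hu.1, hpS _ hn2⟩) h12
  have := huleaf.2
  omega

/-- Closure property: a neighbour (in `S`) of a twig vertex is a twig vertex
or the stalk. -/
lemma twig_closure {S : Set T.V} (hI : Inv T S) {C' : Set T.V} (hch : T.rCherry S C')
    {v' : T.V} (hst : T.rStalk S C' v') {x y : T.V}
    (hx : ∃ ℓ ∈ C', T.rTwigVert S ℓ x) (hyS : y ∈ S) (hadj : T.G.Adj x y) :
    (∃ ℓ ∈ C', T.rTwigVert S ℓ y) ∨ y = v' := by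
  obtain ⟨ℓ, hℓ, htw⟩ := hx
  obtain ⟨p, hp, hpS, hchar⟩ := twig_char hI hch hst hℓ
  obtain ⟨hxp, hxv⟩ := (hchar x).1 htw
  by_cases hy : y ∈ p.support
  · by_cases hyv : y = v'
    · exact Or.inr hyv
    · exact Or.inl ⟨ℓ, hℓ, (hchar y).2 ⟨hy, hyv⟩⟩
  · exfalso
    have hxS : x ∈ S := htw.1
    have hrxy : (T.restrictG S).Adj x y := restrict_adj.2 ⟨hadj, hxS, hyS⟩
    by_cases hxe : x = ℓ
    · subst hxe
      have hlf := (hch.1 x hℓ).2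
      have hne : x ≠ v' := rleaf_ne_rnode (hch.1 x hℓ) hst.1
      obtain ⟨n, hadjn, p', hpeq⟩ := Walk.exists_eq_cons_of_ne hne p
      have hn : n ∈ p.support := by
        rw [hpeq, Walk.support_cons]; exact List.mem_cons_of_mem _ p'.start_mem_support
      have hny : n ≠ y := fun h => hy (h ▸ hn)
      have h2 : 2 ≤ T.rdeg S x := two_le_rdeg
        (restrict_adj.2 ⟨hadjn, hxS, hpS _ hn⟩) hrxy hny
      omega
    · obtain ⟨n₁, n₂, h12, ha1, ha2, hn1, hn2⟩ := adj2 p hp hxp hxe hxv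
      have h3 : 3 ≤ T.rdeg S x := three_le_rdeg
        (restrict_adj.2 ⟨ha1, hxS, hpS _ hn1⟩) (restrict_adj.2 ⟨ha2, hxS, hpS _ hn2⟩)
        hrxy h12 (fun h => hy (h ▸ hn1)) (fun h => hy (h ▸ hn2)) 
      have := nonnode_rdeg_le htw.2.1 hxS
      omega

/-- The set of twig vertices of a cherry. -/
def twigSet (T : WTree α) (S : Set T.V) (C' : Set T.V) : Set T.V :=
  {u | ∃ ℓ ∈ C', T.rTwigVert S ℓ u}

lemma twigSet_subset {S C' : Set T.V} : twigSet T S C' ⊆ S := by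
  rintro u ⟨ℓ, hℓ, htw⟩; exact htw.1

lemma twigSet_nonnode {S C' : Set T.V} {u : T.V} (h : u ∈ twigSet T S C') :
    ¬ T.rnode S u := by obtain ⟨ℓ, hℓ, htw⟩ := h; exact htw.2.1

/-- The separating set used in the separation lemma: the twig vertices of a
cherry together with the pruned regions hanging below them. -/
def sepSet (T : WTree α) (S : Set T.V) (C' : Set T.V) : Set T.V :=
  twigSet T S C' ∪ {y | y ∉ S ∧ ∀ b ∈ S, ∀ q : T.G.Walk y b, ∃ u ∈ q.support, u ∈ twigSet T S C'}

lemma mem_sepSet_of_twig {S C' : Set T.V} {u : T.V} (h : u ∈ twigSet T S C') :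
    u ∈ sepSet T S C' := Or.inl h

lemma not_mem_sepSet {S C' : Set T.V} {b : T.V} (hb : b ∈ S) (hbt : b ∉ twigSet T S C') :
    b ∉ sepSet T S C' := by
  rintro (h | h)
  · exact hbt h
  · exact h.1 hb

lemma sepSet_closed {S : Set T.V} (hI : Inv T S) {C' : Set T.V} (hch : T.rCherry S C')
    {v' : T.V} (hst : T.rStalk S C' v') :
    ∀ x ∈ sepSet T S C', ∀ y, T.G.Adj x y → y ∈ sepSet T S C' ∨ y = v' := by
  rintro x (hx | hx) y hadj
  · by_cases hyS : y ∈ S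
    · rcases twig_closure hI hch hst hx hyS hadj with h | h
      · exact Or.inl (Or.inl h)
      · exact Or.inr h
    · left; right
      obtain ⟨z, hz, hzsep⟩ := hI.entry y hyS
      have hxS : x ∈ S := twigSet_subset hx
      have hzx : z = x := by
        have := hzsep x hxS (Walk.cons hadj.symm Walk.nil)
        rw [Walk.support_cons, Walk.support_nil] at this
        rcases List.mem_cons.1 this with h | h
        · exact absurd (h ▸ hz.1) hyS
        · simpa using h
      exact ⟨hyS, fun b hb q => ⟨z, hzsep b hb q, hzx ▸ hx⟩⟩
  · by_cases hyS : y ∈ S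
    · left; left
      obtain ⟨u, hu1, hu2⟩ := hx.2 y hyS (Walk.cons hadj Walk.nil)
      rw [Walk.support_cons, Walk.support_nil] at hu1
      rcases List.mem_cons.1 hu1 with h | h
      · exact absurd (h ▸ twigSet_subset hu2) hx.1
      · have : u = y := by simpa using h
        exact this ▸ hu2
    · left; right
      refine ⟨hyS, fun b hb q => ?_⟩
      obtain ⟨u, hu1, hu2⟩ := hx.2 b hb (Walk.cons hadj q)
      rw [Walk.support_cons] at hu1
      rcases List.mem_cons.1 hu1 with h | h
      · exact absurd (h ▸ twigSet_subset hu2) hx.1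
      · exact ⟨u, h, hu2⟩

/-- Main separation: any walk from the pruned region of a cherry to a vertex
outside it passes through the stalk. -/
lemma sep_stalk {S : Set T.V} (hI : Inv T S) {C' : Set T.V} (hch : T.rCherry S C')
    {v' : T.V} (hst : T.rStalk S C' v') {u b : T.V} (hu : u ∈ sepSet T S C')
    (hb : b ∈ S) (hbt : b ∉ twigSet T S C') (q : T.G.Walk u b) : v' ∈ q.support :=
  sep_walk (sepSet_closed hI hch hst) hu (not_mem_sepSet hb hbt) q

end WTree

end WAuxB

section WAuxC

namespace WTree

open SimpleGraph Walk SGAux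

variable {α : Type} [Fintype α] {T : WTree α}

/-- Any node on the path between leaves of two cherries with common stalk `v'`
is the stalk. -/
lemma node_on_path_eq_stalk {S : Set T.V} {C' C'' : Set T.V} {v' : T.V}
    (hst' : T.rStalk S C' v') (hst'' : T.rStalk S C'' v') {a b : T.V}
    (ha : a ∈ C') (hb : b ∈ C'') {P : T.G.Walk a b} (hP : P.IsPath)
    (hPS : ∀ u ∈ P.support, u ∈ S) {u : T.V} (hu : u ∈ P.support)
    (hnode : T.rnode S u) : u = v' := by
  have htS : ∀ w ∈ (P.takeUntil u hu).support, w ∈ S := fun w hw =>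
    hPS _ (P.support_takeUntil_subset hu hw)
  have h1 := hst'.2 a ha u hnode (downWalk _ htS) (downWalk_isPath (hP.takeUntil hu))
  rw [downWalk_support] at h1
  have hdS : ∀ w ∈ ((P.dropUntil u hu).reverse).support, w ∈ S := fun w hw => by
    rw [Walk.support_reverse, List.mem_reverse] at hw
    exact hPS _ (P.support_dropUntil_subset hu hw)
  have h2 := hst''.2 b hb u hnode (downWalk _ hdS)
    (downWalk_isPath ((Walk.isPath_reverse_iff _).2 (hP.dropUntil hu)))
  rw [downWalk_support, Walk.support_reverse, List.mem_reverse] at h2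
  exact (meet_take_drop hP hu h1 h2).symm

/-- Leaves of two cherries with common stalk are neighbours. -/
lemma stalk_path_nbr {S : Set T.V} (hI : Inv T S) {C' C'' : Set T.V}
    (hch' : T.rCherry S C') (hch'' : T.rCherry S C'') {v' : T.V}
    (hst' : T.rStalk S C' v') (hst'' : T.rStalk S C'' v') {a b : T.V}
    (ha : a ∈ C') (hb : b ∈ C'') (hne : a ≠ b) : T.rnbr S a b := by
  have haL := hch'.1 a ha
  have hbL := hch''.1 b hb
  obtain ⟨P, hP, hPS⟩ := hI.conn a haL.1 b hbL.1
  have hnodes : ∀ u ∈ P.support, T.rnode S u → u = v' :=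
    fun u hu hn => node_on_path_eq_stalk hst' hst'' ha hb hP hPS hu hn
  have hvP : v' ∈ P.support := by
    by_contra hvP
    obtain ⟨pa, hpa, hpaS, hchar⟩ := twig_char hI hch' hst' ha
    have hbpa : b ∉ pa.support := by
      intro hmem
      have hbv : b ≠ v' := rleaf_ne_rnode hbL hst'.1
      exact hne ((twig_rleaf_eq hI hch' hst' ha ((hchar b).2 ⟨hmem, hbv⟩) hbL)).symm
    have hstart : v' ∉ {x | x ∈ P.support} := hvP
    have hend : a ∈ {x | x ∈ P.support} := P.start_mem_support
    obtain ⟨x, w₁, hadjxw, hxP, hw₁P, hxsup, hw₁sup⟩ :=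
      first_cross hstart hend pa.reverse
    rw [Walk.support_reverse, List.mem_reverse] at hxsup hw₁sup
    have hxS : x ∈ S := hpaS _ hxsup
    have hw₁S : w₁ ∈ S := hpaS _ hw₁sup
    by_cases hw₁a : w₁ = a
    · subst hw₁a
      obtain ⟨n, hadjn, P', hPeq⟩ := Walk.exists_eq_cons_of_ne hne P
      have hnP : n ∈ P.support := by
        rw [hPeq, Walk.support_cons]; exact List.mem_cons_of_mem _ P'.start_mem_support
      have hnx : n ≠ x := fun h => hxP (h ▸ hnP)
      have h2 : 2 ≤ T.rdeg S w₁ := two_le_rdeg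
        (restrict_adj.2 ⟨hadjn, hw₁S, hPS _ hnP⟩)
        (restrict_adj.2 ⟨hadjxw.symm, hw₁S, hxS⟩) hnx
      have := haL.2
      omega
    · by_cases hw₁b : w₁ = b
      · exact hbpa (hw₁b ▸ hw₁sup)
      · obtain ⟨n₁, n₂, h12, ha1, ha2, hn1, hn2⟩ := adj2 P hP hw₁P hw₁a hw₁b
        have h3 : 3 ≤ T.rdeg S w₁ := three_le_rdeg
          (restrict_adj.2 ⟨ha1, hw₁S, hPS _ hn1⟩)
          (restrict_adj.2 ⟨ha2, hw₁S, hPS _ hn2⟩)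
          (restrict_adj.2 ⟨hadjxw.symm, hw₁S, hxS⟩)
          h12 (fun h => hxP (h ▸ hn1)) (fun h => hxP (h ▸ hn2))
        have : T.rnode S w₁ := ⟨hw₁S, by omega⟩
        exact hvP ((hnodes w₁ hw₁P this) ▸ hw₁P)
  refine ⟨hne, downWalk P hPS, downWalk_isPath hP, ?_⟩
  have hset : ((downWalk P hPS).support.toFinset.filter (fun u => T.rnode S u)) = {v'} := by
    apply Finset.ext
    intro u
    rw [Finset.mem_filter, Finset.mem_singleton, List.mem_toFinset, downWalk_support]
    constructor
    · rintro ⟨h1, h2⟩; exact hnodes u h1 h2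
    · rintro rfl; exact ⟨hvP, hst'.1⟩
  rw [hset, Finset.card_singleton]

/-- Two cherries with common stalk merge into a cherry. -/
lemma merge_cherry {S : Set T.V} (hI : Inv T S) {C' C'' : Set T.V}
    (hch' : T.rCherry S C') (hch'' : T.rCherry S C'') {v' : T.V}
    (hst' : T.rStalk S C' v') (hst'' : T.rStalk S C'' v') :
    T.rCherry S (C' ∪ C'') := by
  constructor
  · rintro u (hu | hu)
    · exact hch'.1 u hu
    · exact hch''.1 u hu
  · rintro i (hi | hi) j (hj | hj) hne
    · exact hch'.2 i hi j hj hne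
    · exact stalk_path_nbr hI hch' hch'' hst' hst'' hi hj hne
    · exact stalk_path_nbr hI hch'' hch' hst'' hst' hi hj hne
    · exact hch''.2 i hi j hj hne

lemma cherry_nonempty {S C' : Set T.V} (hgood : T.rGoodCherry S C') : C'.Nonempty := by
  by_contra h
  rw [Set.not_nonempty_iff_eq_empty] at h
  subst h
  obtain ⟨v₀, hst, hlf⟩ := hgood.2
  have hpc : T.pruneCherry S (∅ : Set T.V) = S := by
    unfold pruneCherry
    simp
  rw [hpc] at hlf
  exact rnode_not_rleaf hlf hst.1

lemma stalk_unique {S : Set T.V} (hI : Inv T S) {C' : Set T.V} (hch : T.rCherry S C')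
    (hne : C'.Nonempty) {v v₀ : T.V} (h1 : T.rStalk S C' v) (h2 : T.rStalk S C' v₀) :
    v = v₀ := by
  obtain ⟨a, ha⟩ := hne
  obtain ⟨p, hp, hpS⟩ := hI.conn a (hch.1 a ha).1 v₀ h2.1.1
  have hv : v ∈ p.support := by
    have := h1.2 a ha v₀ h2.1 (downWalk p hpS) (downWalk_isPath hp)
    rwa [downWalk_support] at this
  have htS : ∀ w ∈ (p.takeUntil v hv).support, w ∈ S := fun w hw =>
    hpS _ (p.support_takeUntil_subset hv hw)
  have hmem := h2.2 a ha v h1.1 (downWalk _ htS) (downWalk_isPath (hp.takeUntil hv))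
  rw [downWalk_support] at hmem
  exact endpt_take hp hv hmem

lemma mem_pruneStage {r : ℕ} {S : Set T.V} {u : T.V} :
    u ∈ T.pruneStage r S ↔ u ∈ S ∧ ¬ ∃ C' : Set T.V, T.rGoodCherry S C' ∧
      (T.bdryV S C').card ≤ r ∧ ∃ ℓ ∈ C', T.rTwigVert S ℓ u := Iff.rfl

lemma node_mem_pruneStage {r : ℕ} {S : Set T.V} {w : T.V} (h : T.rnode S w) :
    w ∈ T.pruneStage r S :=
  ⟨h.1, fun ⟨_, _, _, _, _, htw⟩ => htw.2.1 h⟩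

lemma pruneStage_subset_pruneCherry {r : ℕ} {S C' : Set T.V}
    (hgood : T.rGoodCherry S C') (hsmall : (T.bdryV S C').card ≤ r) :
    T.pruneStage r S ⊆ T.pruneCherry S C' := by
  intro u hu
  exact ⟨hu.1, fun h => hu.2 ⟨C', hgood, hsmall, h⟩⟩

lemma pruneStage_subset {r : ℕ} {S : Set T.V} : T.pruneStage r S ⊆ S := fun _ h => h.1

/-- The stalk of a good small cherry is a leaf of the pruned tree. -/
lemma stalk_rleaf_pruneStage {S : Set T.V} (hI : Inv T S) {r : ℕ} {C' : Set T.V}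
    (hgood : T.rGoodCherry S C') (hsmall : (T.bdryV S C').card ≤ r) {v' : T.V}
    (hst : T.rStalk S C' v') (hlf : T.rleaf (T.pruneCherry S C') v') :
    T.rleaf (T.pruneStage r S) v' := by
  have hmem : v' ∈ T.pruneStage r S := node_mem_pruneStage hst.1
  have hle1 : T.rdeg (T.pruneStage r S) v' ≤ 1 := by
    have h1 := rdeg_mono (T := T) (pruneStage_subset_pruneCherry hgood hsmall) v'
    have h2 := hlf.2
    omega
  obtain ⟨x₁, hx₁⟩ := rdeg_one_unique hlf.2
  have hadj : (T.restrictG (T.pruneCherry S C')).Adj v' x₁ := by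
    have : x₁ ∈ (T.restrictG (T.pruneCherry S C')).neighborSet v' := by
      rw [hx₁]; exact rfl
    exact this
  have hadjG : T.G.Adj v' x₁ := hadj.1
  have hx₁pc : x₁ ∈ T.pruneCherry S C' := hadj.2.2
  have hx₁PS : x₁ ∈ T.pruneStage r S := by
    by_contra hcon
    have hx₁S : x₁ ∈ S := hx₁pc.1
    have hex : ∃ C'' : Set T.V, T.rGoodCherry S C'' ∧ (T.bdryV S C'').card ≤ r ∧
        ∃ ℓ ∈ C'', T.rTwigVert S ℓ x₁ := by
      by_contra hno; exact hcon ⟨hx₁S, hno⟩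
    obtain ⟨C'', hgood'', hsmall'', hx₁tw⟩ := hex
    obtain ⟨v'', hst'', hlf''⟩ := hgood''.2
    have hch'' := hgood''.1.1
    rcases twig_closure hI hch'' hst'' hx₁tw hst.1.1 hadjG.symm with h | h
    · obtain ⟨ℓ, _, htw⟩ := h
      exact htw.2.1 hst.1
    · subst h
      have hmerge := merge_cherry hI hgood.1.1 hch'' hst hst''
      have hcomp := hgood.1.2 (C' ∪ C'') hmerge
      have hsub : C'' ⊆ C' := by
        by_contra hns
        obtain ⟨b, hb, hbn⟩ := Set.not_subset.1 hns
        exact hcomp ⟨Set.subset_union_left, fun hall => hbn (hall (Or.inr hb))⟩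
      obtain ⟨ℓ, hℓC'', htw⟩ := hx₁tw
      exact hx₁pc.2 ⟨ℓ, hsub hℓC'', htw⟩
  have hge1 : 1 ≤ T.rdeg (T.pruneStage r S) v' := by
    have hsub : ({x₁} : Set T.V) ⊆ (T.restrictG (T.pruneStage r S)).neighborSet v' := by
      intro y hy
      rcases hy with rfl
      exact restrict_adj.2 ⟨hadjG, hmem, hx₁PS⟩
    calc 1 = ({x₁} : Set T.V).ncard := (Set.ncard_singleton x₁).symm
      _ ≤ _ := Set.ncard_le_ncard hsub (Set.toFinite _)
  exact ⟨hmem, by omega⟩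

end WTree

end WAuxC

section WAuxD

namespace WTree

open SimpleGraph Walk SGAux

variable {α : Type} [Fintype α] {T : WTree α}

lemma not_mem_pruneStage {r : ℕ} {S : Set T.V} {u : T.V} (huS : u ∈ S)
    (hu : u ∉ T.pruneStage r S) :
    ∃ C' : Set T.V, T.rGoodCherry S C' ∧ (T.bdryV S C').card ≤ r ∧
      u ∈ twigSet T S C' := by
  by_contra hno
  push_neg at hno
  exact hu ⟨huS, fun ⟨C', h1, h2, h3⟩ => hno C' h1 h2 h3⟩

lemma twigSet_not_pruneStage {r : ℕ} {S C' : Set T.V}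
    (hgood : T.rGoodCherry S C') (hsmall : (T.bdryV S C').card ≤ r) {u : T.V}
    (hu : u ∈ twigSet T S C') : u ∉ T.pruneStage r S :=
  fun h => h.2 ⟨C', hgood, hsmall, hu⟩

lemma inv_pruneStage {S : Set T.V} (hI : Inv T S) (r : ℕ) :
    Inv T (T.pruneStage r S) := by
  constructor
  · -- conn
    intro a ha b hb
    obtain ⟨p, hp, hpS⟩ := hI.conn a (pruneStage_subset ha) b (pruneStage_subset hb)
    refine ⟨p, hp, ?_⟩
    intro u hu
    by_contra huPS
    obtain ⟨C', hgood, hsmall, htw⟩ := not_mem_pruneStage (hpS u hu) huPS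
    obtain ⟨v', hst, hlf⟩ := hgood.2
    have hch := hgood.1.1
    have hna : a ∉ twigSet T S C' := fun hat => ha.2 ⟨C', hgood, hsmall, hat⟩
    have hnb : b ∉ twigSet T S C' := fun hbt => hb.2 ⟨C', hgood, hsmall, hbt⟩
    have sep1 : v' ∈ (p.takeUntil u hu).support := by
      have := sep_stalk hI hch hst (Or.inl htw) (pruneStage_subset ha) hna
        (p.takeUntil u hu).reverse
      rwa [Walk.support_reverse, List.mem_reverse] at this
    have sep2 : v' ∈ (p.dropUntil u hu).support :=
      sep_stalk hI hch hst (Or.inl htw) (pruneStage_subset hb) hnb (p.dropUntil u hu)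
    have : v' = u := meet_take_drop hp hu sep1 sep2
    exact (twigSet_nonnode htw) (this ▸ hst.1)
  · -- deg
    intro u huPS
    have huS : u ∈ S := pruneStage_subset huPS
    by_cases hall : ∀ y, (T.restrictG S).Adj u y → y ∈ T.pruneStage r S
    · have heq : (T.restrictG (T.pruneStage r S)).neighborSet u =
          (T.restrictG S).neighborSet u := by
        apply Set.ext
        intro y
        constructor
        · intro h; exact ⟨h.1, huS, pruneStage_subset h.2.2⟩
        · intro h; exact ⟨h.1, huPS, hall y h⟩
      have : T.rdeg (T.pruneStage r S) u = T.rdeg S u := by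
        unfold rdeg; rw [heq]
      rw [this]
      exact hI.deg u huS
    · push_neg at hall
      obtain ⟨t, hadj, htPS⟩ := hall
      obtain ⟨C'', hgood'', hsmall'', htw''⟩ := not_mem_pruneStage hadj.2.2 htPS
      obtain ⟨v'', hst'', hlf''⟩ := hgood''.2
      have hch'' := hgood''.1.1
      rcases twig_closure hI hch'' hst'' htw'' huS hadj.1.symm with h | h
      · exact absurd huPS (twigSet_not_pruneStage hgood'' hsmall'' h)
      · subst h
        right
        have h1 := rdeg_mono (T := T) (pruneStage_subset_pruneCherry hgood'' hsmall'') u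
        have h2 := hlf''.2
        omega
  · -- entry
    intro u huPS
    by_cases huS : u ∈ S
    · obtain ⟨C', hgood, hsmall, htw⟩ := not_mem_pruneStage huS huPS
      obtain ⟨v', hst, hlf⟩ := hgood.2
      have hch := hgood.1.1
      refine ⟨v', stalk_rleaf_pruneStage hI hgood hsmall hst hlf, ?_⟩
      intro b hb q
      exact sep_stalk hI hch hst (Or.inl htw) (pruneStage_subset hb)
        (fun hbt => hb.2 ⟨C', hgood, hsmall, hbt⟩) q
    · obtain ⟨z, hz, hzsep⟩ := hI.entry u huS
      by_cases hzPS : z ∈ T.pruneStage r S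
      · refine ⟨z, ⟨hzPS, ?_⟩, fun b hb q => hzsep b (pruneStage_subset hb) q⟩
        obtain ⟨t, ht⟩ := rdeg_one_unique hz.2
        have hadj : (T.restrictG S).Adj z t := by
          have : t ∈ (T.restrictG S).neighborSet z := by rw [ht]; exact rfl
          exact this
        have htPS : t ∈ T.pruneStage r S := by
          by_contra hcon
          obtain ⟨C'', hgood'', hsmall'', htw''⟩ := not_mem_pruneStage hadj.2.2 hcon
          obtain ⟨v'', hst'', hlf''⟩ := hgood''.2
          have hch'' := hgood''.1.1
          rcases twig_closure hI hch'' hst'' htw'' hz.1 hadj.1.symm with h | h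
          · exact absurd hzPS (twigSet_not_pruneStage hgood'' hsmall'' h)
          · exact rnode_not_rleaf hz (h ▸ hst''.1)
        have hge : 1 ≤ T.rdeg (T.pruneStage r S) z := by
          have hsub : ({t} : Set T.V) ⊆
              (T.restrictG (T.pruneStage r S)).neighborSet z := by
            intro y hy; rcases hy with rfl
            exact restrict_adj.2 ⟨hadj.1, hzPS, htPS⟩
          calc 1 = ({t} : Set T.V).ncard := (Set.ncard_singleton t).symm
            _ ≤ _ := Set.ncard_le_ncard hsub (Set.toFinite _)
        have hle : T.rdeg (T.pruneStage r S) z ≤ T.rdeg S z :=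
          rdeg_mono (T := T) pruneStage_subset z
        have := hz.2
        omega
      · obtain ⟨C', hgood, hsmall, htw⟩ := not_mem_pruneStage hz.1 hzPS
        obtain ⟨v', hst, hlf⟩ := hgood.2
        have hch := hgood.1.1
        refine ⟨v', stalk_rleaf_pruneStage hI hgood hsmall hst hlf, ?_⟩
        intro b hb q
        have huSep : u ∈ sepSet T S C' :=
          Or.inr ⟨huS, fun b' hb' q' => ⟨z, hzsep b' hb' q', htw⟩⟩
        exact sep_stalk hI hch hst huSep (pruneStage_subset hb)
          (fun hbt => hb.2 ⟨C', hgood, hsmall, hbt⟩) q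

lemma inv_stageSet (T : WTree α) (r : ℕ) : ∀ s, Inv T (T.stageSet r s) := by
  intro s
  induction s with
  | zero =>
    constructor
    · intro a _ b _
      obtain ⟨w⟩ := T.isTree.isConnected.preconnected a b
      exact ⟨w.bypass, w.bypass_isPath, fun u _ => trivial⟩
    · intro u _
      left
      have heq : (T.restrictG (T.stageSet r 0)).neighborSet u = T.G.neighborSet u :=
        Set.ext fun y => ⟨fun h => h.1, fun h => ⟨h, trivial, trivial⟩⟩
      unfold rdeg; rw [heq]
    · intro u hu
      exact absurd trivial hu
  | succ s ih => exact inv_pruneStage ih r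

end WTree

end WAuxD

section WAuxE1

namespace WTree

open SimpleGraph Walk SGAux

variable {α : Type} [Fintype α] {T : WTree α}

lemma path_self_support {a : T.V} (p : T.G.Walk a a) (hp : p.IsPath) :
    ∀ u ∈ p.support, u = a := by
  cases p with
  | nil => intro u hu; simpa using hu
  | cons h q =>
    exfalso
    rw [Walk.cons_isPath_iff] at hp
    exact hp.2 q.end_mem_support

lemma stageSet_succ (r s : ℕ) : T.stageSet r (s + 1) = T.pruneStage r (T.stageSet r s) :=
  rfl

lemma mem_bdryV {S C : Set T.V} {i : α} :
    i ∈ T.bdryV S C ↔ ∃ y ∈ C, T.descLeaf S i y := by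
  unfold bdryV
  simp

/-- A leaf of the restricted tree survives pruning as a leaf, if it survives. -/
lemma rleaf_persist {S : Set T.V} (hI : Inv T S) {r : ℕ} {z : T.V}
    (hz : T.rleaf S z) (hzPS : z ∈ T.pruneStage r S) :
    T.rleaf (T.pruneStage r S) z := by
  refine ⟨hzPS, ?_⟩
  obtain ⟨t, ht⟩ := rdeg_one_unique hz.2
  have hadj : (T.restrictG S).Adj z t := by
    have : t ∈ (T.restrictG S).neighborSet z := by rw [ht]; exact rfl
    exact this
  have htPS : t ∈ T.pruneStage r S := by
    by_contra hcon
    obtain ⟨C'', hgood'', hsmall'', htw''⟩ := not_mem_pruneStage hadj.2.2 hcon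
    obtain ⟨v'', hst'', hlf''⟩ := hgood''.2
    have hch'' := hgood''.1.1
    rcases twig_closure hI hch'' hst'' htw'' hz.1 hadj.1.symm with h | h
    · exact absurd hzPS (twigSet_not_pruneStage hgood'' hsmall'' h)
    · exact rnode_not_rleaf hz (h ▸ hst''.1)
  have hge : 1 ≤ T.rdeg (T.pruneStage r S) z := by
    have hsub : ({t} : Set T.V) ⊆ (T.restrictG (T.pruneStage r S)).neighborSet z := by
      intro y hy; rcases hy with rfl
      exact restrict_adj.2 ⟨hadj.1, hzPS, htPS⟩
    calc 1 = ({t} : Set T.V).ncard := (Set.ncard_singleton t).symm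
      _ ≤ _ := Set.ncard_le_ncard hsub (Set.toFinite _)
  have hle : T.rdeg (T.pruneStage r S) z ≤ T.rdeg S z :=
    rdeg_mono (T := T) pruneStage_subset z
  have := hz.2
  omega

/-- A labelled leaf of the tree lying in `S` is a leaf of the restricted tree. -/
lemma leaf_label_rleaf {S : Set T.V} (hI : Inv T S) {i : α} (h : T.label i ∈ S) :
    T.rleaf S (T.label i) := by
  have gdeg : (T.G.neighborSet (T.label i)).ncard = 1 := (T.leaf_iff _).2 ⟨i, rfl⟩
  have hle : T.rdeg S (T.label i) ≤ 1 := by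
    have := rdeg_le_gdeg (T := T) S (T.label i)
    omega
  refine ⟨h, ?_⟩
  by_contra hne
  have h0 : T.rdeg S (T.label i) = 0 := by omega
  obtain ⟨t, ht⟩ := Set.ncard_eq_one.1 gdeg
  have hadj : T.G.Adj (T.label i) t := by
    have : t ∈ T.G.neighborSet (T.label i) := by rw [ht]; exact rfl
    exact this
  have htS : t ∉ S := by
    intro htS
    have hsub : ({t} : Set T.V) ⊆ (T.restrictG S).neighborSet (T.label i) := by
      intro y hy; rcases hy with rfl
      exact restrict_adj.2 ⟨hadj, h, htS⟩
    have : 1 ≤ T.rdeg S (T.label i) := by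
      calc 1 = ({t} : Set T.V).ncard := (Set.ncard_singleton t).symm
        _ ≤ _ := Set.ncard_le_ncard hsub (Set.toFinite _)
    omega
  obtain ⟨z, hz, hzsep⟩ := hI.entry t htS
  have := hzsep (T.label i) h (Walk.cons hadj.symm Walk.nil)
  rw [Walk.support_cons, Walk.support_nil] at this
  rcases List.mem_cons.1 this with hh | hh
  · exact htS (hh ▸ hz.1)
  · have : z = T.label i := by simpa using hh
    subst this
    have := hz.2
    omega

/-- A cherry sharing the stalk with a complete good cherry is contained in it. -/
lemma cherry_sub_of_common_stalk {S : Set T.V} (hI : Inv T S) {C C'' : Set T.V}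
    (hgood : T.rGoodCherry S C) (hch'' : T.rCherry S C'') {v : T.V}
    (hstC : T.rStalk S C v) (hst'' : T.rStalk S C'' v) : C'' ⊆ C := by
  have hmerge := merge_cherry hI hgood.1.1 hch'' hstC hst''
  have hcomp := hgood.1.2 (C ∪ C'') hmerge
  by_contra hns
  obtain ⟨b, hb, hbn⟩ := Set.not_subset.1 hns
  exact hcomp ⟨Set.subset_union_left, fun hall => hbn (hall (Or.inr hb))⟩

end WTree

end WAuxE1

section WAuxE2

namespace WTree

open SimpleGraph Walk SGAux

variable {α : Type} [Fintype α] {T : WTree α}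

/-- If `c ∈ S` is off the path `π` joining two `S`-leaves, some vertex of `π`
is a node. -/
lemma cross_into_path {S : Set T.V} (hI : Inv T S) {v u : T.V} (hne : v ≠ u)
    (hv : T.rleaf S v) (hu : T.rleaf S u) {π : T.G.Walk v u} (hπ : π.IsPath)
    (hπS : ∀ w ∈ π.support, w ∈ S) {c : T.V} (hc : c ∈ S) (hcπ : c ∉ π.support) :
    ∃ w₁ ∈ π.support, T.rnode S w₁ := by
  obtain ⟨ρ, hρ, hρS⟩ := hI.conn c hc v hv.1
  have hstart : c ∉ {x | x ∈ π.support} := hcπ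
  have hend : v ∈ {x | x ∈ π.support} := π.start_mem_support
  obtain ⟨x, w₁, hadjxw, hxP, hw₁P, hxρ, hw₁ρ⟩ := first_cross hstart hend ρ
  have hxS : x ∈ S := hρS _ hxρ
  have hw₁S : w₁ ∈ S := hρS _ hw₁ρ
  by_cases hw₁v : w₁ = v
  · subst hw₁v
    obtain ⟨n, hadjn, π', hπeq⟩ := Walk.exists_eq_cons_of_ne hne π
    have hnπ : n ∈ π.support := by
      rw [hπeq, Walk.support_cons]; exact List.mem_cons_of_mem _ π'.start_mem_support
    have h2 : 2 ≤ T.rdeg S w₁ := two_le_rdeg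
      (restrict_adj.2 ⟨hadjn, hw₁S, hπS _ hnπ⟩)
      (restrict_adj.2 ⟨hadjxw.symm, hw₁S, hxS⟩) (fun h => hxP (h ▸ hnπ))
    have := hv.2
    omega
  · by_cases hw₁u : w₁ = u
    · subst hw₁u
      obtain ⟨n, hadjn, π', hπeq⟩ := Walk.exists_eq_cons_of_ne (Ne.symm hne) π.reverse
      have hnπ : n ∈ π.support := by
        have : n ∈ π.reverse.support := by
          rw [hπeq, Walk.support_cons]; exact List.mem_cons_of_mem _ π'.start_mem_support
        rwa [Walk.support_reverse, List.mem_reverse] at this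
      have h2 : 2 ≤ T.rdeg S w₁ := two_le_rdeg
        (restrict_adj.2 ⟨hadjn, hw₁S, hπS _ hnπ⟩)
        (restrict_adj.2 ⟨hadjxw.symm, hw₁S, hxS⟩) (fun h => hxP (h ▸ hnπ))
      have := hu.2
      omega
    · obtain ⟨n₁, n₂, h12, ha1, ha2, hn1, hn2⟩ := adj2 π hπ hw₁P hw₁v hw₁u
      have h3 : 3 ≤ T.rdeg S w₁ := three_le_rdeg
        (restrict_adj.2 ⟨ha1, hw₁S, hπS _ hn1⟩)
        (restrict_adj.2 ⟨ha2, hw₁S, hπS _ hn2⟩)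
        (restrict_adj.2 ⟨hadjxw.symm, hw₁S, hxS⟩)
        h12 (fun h => hxP (h ▸ hn1)) (fun h => hxP (h ▸ hn2))
      exact ⟨w₁, hw₁P, ⟨hw₁S, by omega⟩⟩

/-- A leaf of `P^{s+1}` on the same side of the twig edge as the stalk `v`
is `v` itself. -/
lemma side_leaf_eq_stalk {r s : ℕ} {v : T.V} (hvlf : T.rleaf (T.stageSet r (s + 1)) v)
    {x₀ y₀ : T.V} (hTwig : T.rOnTwigEdge (T.stageSet r (s + 1)) v s(x₀, y₀))
    {u : T.V} (hulf : T.rleaf (T.stageSet r (s + 1)) u)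
    (hreach : (T.G.deleteEdges {s(x₀, y₀)}).Reachable u v) : u = v := by
  set S' := T.stageSet r (s + 1) with hS'
  have hIS' : Inv T S' := inv_stageSet T r (s + 1)
  by_contra hne
  have hadj' : (T.restrictG S').Adj x₀ y₀ := hTwig.1
  have hadjG : T.G.Adj x₀ y₀ := hadj'.1
  have hx₀S' : x₀ ∈ S' := hadj'.2.1
  have hy₀S' : y₀ ∈ S' := hadj'.2.2
  obtain ⟨π, hπ, hπS⟩ := hIS'.conn v hvlf.1 u hulf.1
  -- the unique path from u to v avoids the edge
  obtain ⟨q⟩ := hreach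
  have hsub : ∀ f ∈ q.edges, f ∈ T.G.edgeSet := fun f hf =>
    SimpleGraph.edgeSet_subset_edgeSet.2 (SimpleGraph.deleteEdges_le _)
      (q.edges_subset_edgeSet hf)
  set qT := q.transfer T.G hsub with hqT
  have he_qT : s(x₀, y₀) ∉ qT.edges := by
    intro hmem
    rw [Walk.edges_transfer] at hmem
    have := q.edges_subset_edgeSet hmem
    rw [SimpleGraph.edgeSet_deleteEdges] at this
    exact this.2 rfl
  have huniq : qT.bypass = π.reverse :=
    unique_path T.isTree _ _ qT.bypass_isPath ((Walk.isPath_reverse_iff π).2 hπ)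
  have he_π : s(x₀, y₀) ∉ π.edges := by
    intro h
    have h' : s(x₀, y₀) ∈ π.reverse.edges := by
      rw [Walk.edges_reverse, List.mem_reverse]; exact h
    rw [← huniq] at h'
    exact he_qT (qT.edges_bypass_subset h')
  -- no node of S' lies on π
  have hnoNodeπ : ∀ w ∈ π.support, ¬ T.rnode S' w := by
    intro w hw hnode
    have htS : ∀ z ∈ (π.takeUntil w hw).support, z ∈ S' := fun z hz =>
      hπS _ (π.support_takeUntil_subset hw hz)
    have he2 := hTwig.2 w hnode (downWalk _ htS) (downWalk_isPath (hπ.takeUntil hw))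
    rw [downWalk_edges] at he2
    exact he_π (π.edges_takeUntil_subset hw he2)
  -- hence S' has no nodes at all
  have hnoNode : ∀ w, ¬ T.rnode S' w := by
    intro w hnode
    have hwπ : w ∉ π.support := fun h => hnoNodeπ w h hnode
    obtain ⟨w₁, hw₁π, hw₁n⟩ :=
      cross_into_path hIS' (fun h => hne h.symm) hvlf hulf hπ hπS hnode.1 hwπ
    exact hnoNodeπ w₁ hw₁π hw₁n
  -- hence S' is covered by π
  have hcover : ∀ c ∈ S', c ∈ π.support := by
    intro c hcS'
    by_contra hcπ
    obtain ⟨w₁, hw₁π, hw₁n⟩ :=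
      cross_into_path hIS' (fun h => hne h.symm) hvlf hulf hπ hπS hcS' hcπ
    exact hnoNode w₁ hw₁n
  -- so both endpoints of the edge are on π, whence the edge is on π
  have hx₀π : x₀ ∈ π.support := hcover x₀ hx₀S'
  have hy₀π : y₀ ∈ π.support := by
    exact hcover y₀ hy₀S'
  have hy₀' : y₀ ∈ (π.takeUntil x₀ hx₀π).support ∨ y₀ ∈ (π.dropUntil x₀ hx₀π).support := by
    rw [← Walk.mem_support_append_iff, π.take_spec hx₀π]
    exact hy₀π
  rcases hy₀' with hyt | hyd
  · have ht' := (hπ.takeUntil hx₀π).dropUntil hyt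
    have hsingle : ((π.takeUntil x₀ hx₀π).dropUntil y₀ hyt) =
        Walk.cons hadjG.symm Walk.nil := by
      apply unique_path T.isTree _ _ ht'
      rw [Walk.cons_isPath_iff]
      simp [hadjG.ne']
    have : s(x₀, y₀) ∈ ((π.takeUntil x₀ hx₀π).dropUntil y₀ hyt).edges := by
      rw [hsingle, Walk.edges_cons]
      simp [Sym2.eq_swap]
    exact he_π (π.edges_takeUntil_subset hx₀π
      ((π.takeUntil x₀ hx₀π).edges_dropUntil_subset hyt this))
  · have hd' := (hπ.dropUntil hx₀π).takeUntil hyd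
    have hsingle : ((π.dropUntil x₀ hx₀π).takeUntil y₀ hyd) =
        Walk.cons hadjG Walk.nil := by
      apply unique_path T.isTree _ _ hd'
      rw [Walk.cons_isPath_iff]
      simp [hadjG.ne]
    have : s(x₀, y₀) ∈ ((π.dropUntil x₀ hx₀π).takeUntil y₀ hyd).edges := by
      rw [hsingle, Walk.edges_cons]
      simp
    exact he_π (π.edges_dropUntil_subset hx₀π
      ((π.dropUntil x₀ hx₀π).edges_takeUntil_subset hyd this))

end WTree

end WAuxE2

section WAuxE3

namespace WTree

open SimpleGraph Walk SGAux

variable {α : Type} [Fintype α] {T : WTree α}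

lemma hier_side_fwd {r s : ℕ} {C : Set T.V}
    (hgood : T.rGoodCherry (T.stageSet r s) C)
    (hsmall : (T.bdryV (T.stageSet r s) C).card ≤ r)
    {v : T.V} (hstalk : T.rStalk (T.stageSet r s) C v)
    {x₀ y₀ : T.V} (hTwig : T.rOnTwigEdge (T.stageSet r (s + 1)) v s(x₀, y₀))
    (i : α) (hi : i ∈ T.bdryV (T.stageSet r s) C) :
    (T.G.deleteEdges {s(x₀, y₀)}).Reachable (T.label i) v := by
  set S := T.stageSet r s with hS
  have hIS : Inv T S := inv_stageSet T r s
  have hadj' : (T.restrictG (T.stageSet r (s + 1))).Adj x₀ y₀ := hTwig.1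
  have hadjG : T.G.Adj x₀ y₀ := hadj'.1
  have hx₀S' : x₀ ∈ T.stageSet r (s + 1) := hadj'.2.1
  have hy₀S' : y₀ ∈ T.stageSet r (s + 1) := hadj'.2.2
  obtain ⟨y, hyC, hylf, hyprop⟩ := mem_bdryV.1 hi
  -- the path from the leaf `i` to `y`
  obtain ⟨w0⟩ := T.isTree.isConnected.preconnected (T.label i) y
  set q1 := w0.bypass with hq1def
  have hq1 : q1.IsPath := w0.bypass_isPath
  have claim1 : ∀ u ∈ q1.support, u ∈ S → u = y := by
    intro u hu huS
    by_cases hiS : T.label i ∈ S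
    · have hilf := leaf_label_rleaf hIS hiS
      have hiy : T.label i = y := hyprop q1 hq1 (T.label i) q1.start_mem_support hilf
      have hcp : (q1.copy hiy rfl).IsPath := by rwa [Walk.isPath_copy]
      have := path_self_support (q1.copy hiy rfl) hcp u (by rwa [Walk.support_copy])
      exact this
    · obtain ⟨z, hz, hzsep⟩ := hIS.entry _ hiS
      have hzmem : z ∈ (q1.takeUntil u hu).support := hzsep u huS _
      have hzq1 : z ∈ q1.support := q1.support_takeUntil_subset hu hzmem
      have hzy : z = y := hyprop q1 hq1 z hzq1 hz
      subst hzy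
      exact endpt_take hq1 hu hzmem
  have hytw : y ∈ twigSet T S C :=
    ⟨y, hyC, hylf.1, fun hn => rnode_not_rleaf hylf hn,
      fun w hw p hp => p.start_mem_support⟩
  have hyS' : y ∉ T.stageSet r (s + 1) := twigSet_not_pruneStage hgood hsmall hytw
  have he_q1 : s(x₀, y₀) ∉ q1.edges := by
    intro h
    have hx₀sup := q1.fst_mem_support_of_mem_edges h
    have := claim1 x₀ hx₀sup (pruneStage_subset hx₀S')
    exact hyS' (this ▸ hx₀S')
  obtain ⟨q2, hq2, hq2S⟩ := hIS.conn y hylf.1 v hstalk.1.1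
  have claim2 : ∀ u ∈ q2.support, u ≠ v → u ∈ twigSet T S C := by
    intro u hu huv
    refine ⟨y, hyC, hq2S u hu, ?_, ?_⟩
    · intro hnode
      have htS : ∀ w ∈ (q2.takeUntil u hu).support, w ∈ S := fun w hw =>
        hq2S _ (q2.support_takeUntil_subset hu hw)
      have := hstalk.2 y hyC u hnode (downWalk _ htS) (downWalk_isPath (hq2.takeUntil hu))
      rw [downWalk_support] at this
      exact huv (endpt_take hq2 hu this)
    · intro w hw p hp
      have hvp := hstalk.2 y hyC w hw p hp
      have hqG : (upWalk p).IsPath := upWalk_isPath hp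
      have hvpG : v ∈ (upWalk p).support := by rw [upWalk_support]; exact hvp
      have hteq : (upWalk p).takeUntil v hvpG = q2 :=
        unique_path T.isTree _ _ (hqG.takeUntil hvpG) hq2
      have h1 : u ∈ ((upWalk p).takeUntil v hvpG).support := by rw [hteq]; exact hu
      have h2 := (upWalk p).support_takeUntil_subset hvpG h1
      rwa [upWalk_support] at h2
  have he_q2 : s(x₀, y₀) ∉ q2.edges := by
    intro h
    have hx₀sup := q2.fst_mem_support_of_mem_edges h
    have hy₀sup := q2.snd_mem_support_of_mem_edges h
    by_cases hxv : x₀ = v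
    · have hyv : y₀ ≠ v := fun hyv => hadjG.ne (hxv.trans hyv.symm)
      exact twigSet_not_pruneStage hgood hsmall (claim2 y₀ hy₀sup hyv) hy₀S'
    · exact twigSet_not_pruneStage hgood hsmall (claim2 x₀ hx₀sup hxv) hx₀S'
  have r1 : (T.G.deleteEdges {s(x₀, y₀)}).Reachable (T.label i) y :=
    ⟨q1.toDeleteEdges _ (fun f hf => by
      simp only [Set.mem_singleton_iff]
      exact fun hh => he_q1 (hh ▸ hf))⟩
  have r2 : (T.G.deleteEdges {s(x₀, y₀)}).Reachable y v :=
    ⟨q2.toDeleteEdges _ (fun f hf => by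
      simp only [Set.mem_singleton_iff]
      exact fun hh => he_q2 (hh ▸ hf))⟩
  exact r1.trans r2

lemma hier_side_bwd {r s : ℕ} {C : Set T.V}
    (hgood : T.rGoodCherry (T.stageSet r s) C)
    (hsmall : (T.bdryV (T.stageSet r s) C).card ≤ r)
    {v : T.V} (hstalk : T.rStalk (T.stageSet r s) C v)
    (hvS' : T.rleaf (T.stageSet r (s + 1)) v)
    {x₀ y₀ : T.V} (hTwig : T.rOnTwigEdge (T.stageSet r (s + 1)) v s(x₀, y₀))
    (i : α) (hreach : (T.G.deleteEdges {s(x₀, y₀)}).Reachable (T.label i) v) :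
    i ∈ T.bdryV (T.stageSet r s) C := by
  set S := T.stageSet r s with hS
  have hIS : Inv T S := inv_stageSet T r s
  have hch := hgood.1.1
  have hadj' : (T.restrictG (T.stageSet r (s + 1))).Adj x₀ y₀ := hTwig.1
  have hadjG : T.G.Adj x₀ y₀ := hadj'.1
  have hx₀S' : x₀ ∈ T.stageSet r (s + 1) := hadj'.2.1
  have hy₀S' : y₀ ∈ T.stageSet r (s + 1) := hadj'.2.2
  obtain ⟨q⟩ := hreach
  have hsub : ∀ f ∈ q.edges, f ∈ T.G.edgeSet := fun f hf =>
    SimpleGraph.edgeSet_subset_edgeSet.2 (SimpleGraph.deleteEdges_le _)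
      (q.edges_subset_edgeSet hf)
  set qB := (q.transfer T.G hsub).bypass with hqBdef
  have hqB : qB.IsPath := (q.transfer T.G hsub).bypass_isPath
  have he_qB : s(x₀, y₀) ∉ qB.edges := by
    intro hmem
    have h1 := (q.transfer T.G hsub).edges_bypass_subset hmem
    rw [Walk.edges_transfer] at h1
    have := q.edges_subset_edgeSet h1
    rw [SimpleGraph.edgeSet_deleteEdges] at this
    exact this.2 rfl
  obtain ⟨z₀, hz₀lf, hz₀mem, hkey⟩ : ∃ z₀, T.rleaf S z₀ ∧ z₀ ∈ qB.support ∧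
      ∀ p : T.G.Walk (T.label i) z₀, p.IsPath →
        ∀ u ∈ p.support, T.rleaf S u → u = z₀ := by
    by_cases hiS : T.label i ∈ S
    · exact ⟨T.label i, leaf_label_rleaf hIS hiS, qB.start_mem_support,
        fun p hp u hu _ => path_self_support p hp u hu⟩
    · obtain ⟨z, hz, hzsep⟩ := hIS.entry _ hiS
      refine ⟨z, hz, hzsep v hstalk.1.1 qB, fun p hp u hu hulf => ?_⟩
      have hzmem : z ∈ (p.takeUntil u hu).support := hzsep u hulf.1 _
      exact endpt_take hp hu hzmem
  -- z₀ is not in the pruned tree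
  have hz₀S' : z₀ ∉ T.stageSet r (s + 1) := by
    intro hz₀S'
    have hz₀lf' : T.rleaf (T.stageSet r (s + 1)) z₀ := rleaf_persist hIS hz₀lf hz₀S'
    have hd : s(x₀, y₀) ∉ (qB.dropUntil z₀ hz₀mem).edges :=
      fun h => he_qB (qB.edges_dropUntil_subset hz₀mem h)
    have hr : (T.G.deleteEdges {s(x₀, y₀)}).Reachable z₀ v :=
      ⟨(qB.dropUntil z₀ hz₀mem).toDeleteEdges _ (fun f hf => by
        simp only [Set.mem_singleton_iff]
        exact fun hh => hd (hh ▸ hf))⟩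
    have heq := side_leaf_eq_stalk hvS' hTwig hz₀lf' hr
    subst heq
    exact rnode_not_rleaf hz₀lf hstalk.1
  obtain ⟨C'', hgood'', hsmall'', htw''⟩ := not_mem_pruneStage hz₀lf.1 hz₀S'
  obtain ⟨v'', hst'', hlf''⟩ := hgood''.2
  have hch'' := hgood''.1.1
  obtain ⟨ℓ'', hℓ'', htwv⟩ := htw''
  have hz₀ℓ : z₀ = ℓ'' := twig_rleaf_eq hIS hch'' hst'' hℓ'' htwv hz₀lf
  have hz₀C'' : z₀ ∈ C'' := hz₀ℓ ▸ hℓ''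
  obtain ⟨p'', hp'', hp''S, hchar''⟩ := twig_char hIS hch'' hst'' hz₀C''
  have he_p'' : s(x₀, y₀) ∉ p''.edges := by
    intro h
    have hx₀sup := p''.fst_mem_support_of_mem_edges h
    have hy₀sup := p''.snd_mem_support_of_mem_edges h
    have hside : ∀ u, u ∈ p''.support → u ∈ T.stageSet r (s + 1) → u = v'' := by
      intro u hu huS'
      by_contra hne
      exact twigSet_not_pruneStage hgood'' hsmall''
        ⟨z₀, hz₀C'', (hchar'' u).2 ⟨hu, hne⟩⟩ huS'
    have h1 := hside x₀ hx₀sup hx₀S'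
    have h2 := hside y₀ hy₀sup hy₀S'
    exact hadjG.ne (h1.trans h2.symm)
  have hr1 : (T.G.deleteEdges {s(x₀, y₀)}).Reachable z₀ v'' :=
    ⟨p''.toDeleteEdges _ (fun f hf => by
      simp only [Set.mem_singleton_iff]
      exact fun hh => he_p'' (hh ▸ hf))⟩
  have hd : s(x₀, y₀) ∉ (qB.dropUntil z₀ hz₀mem).edges :=
    fun h => he_qB (qB.edges_dropUntil_subset hz₀mem h)
  have hr2 : (T.G.deleteEdges {s(x₀, y₀)}).Reachable z₀ v :=
    ⟨(qB.dropUntil z₀ hz₀mem).toDeleteEdges _ (fun f hf => by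
      simp only [Set.mem_singleton_iff]
      exact fun hh => hd (hh ▸ hf))⟩
  have hv''lf' : T.rleaf (T.stageSet r (s + 1)) v'' :=
    stalk_rleaf_pruneStage hIS hgood'' hsmall'' hst'' hlf''
  have hv''eq : v'' = v := side_leaf_eq_stalk hvS' hTwig hv''lf' (hr1.symm.trans hr2)
  subst hv''eq
  have hsubC : C'' ⊆ C := cherry_sub_of_common_stalk hIS hgood hch'' hstalk hst''
  exact mem_bdryV.2 ⟨z₀, hsubC hz₀C'', hz₀lf, fun p hp u hu hulf => hkey p hp u hu hulf⟩

end WTree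

end WAuxE3

/-- **Remark.** Let `2 ≤ k ≤ n-2`, let `𝒫 = (P,w)` be a weighted pseudostar of kind
`(n,k)` with `L(P) = [n]` and let `ℋ` be the hierarchy over `[n]` associated to `P`.
For every `J ∈ ℋ` (say `J = ∂C` for a good cherry `C` of `P^s`, with associated edge
`e_J` lying on the twig of the stalk of `C` in `P^{s+1}`) and every `k`-subset `I` of
`[n]`, the subtree realizing `D_I(𝒫)` contains `e_J` if and only if `I ∩ J ≠ ∅` and
`I ⊄ J`. -/
theorem subtree_contains_cluster_edge (n k : ℕ) (hk2 : 2 ≤ k) (hkn : k ≤ n - 2)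
    (T : WTree (Fin n)) (hps : T.IsPseudostar k) :
    ∀ J ∈ T.psHier (n - k), ∀ (s : ℕ) (C : Set T.V),
      T.rGoodCherry (T.stageSet (n - k) s) C →
      (T.bdryV (T.stageSet (n - k) s) C).card ≤ n - k →
      J = T.bdryV (T.stageSet (n - k) s) C →
      ∀ v : T.V, T.rStalk (T.stageSet (n - k) s) C v →
      ∀ e : Sym2 T.V, T.rOnTwigEdge (T.stageSet (n - k) (s + 1)) v e →
      ∀ I : Finset (Fin n), I.card = k →
        (T.inMinSubtree I e ↔ (I ∩ J).Nonempty ∧ ¬ I ⊆ J) := by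
  classical
  intro J hJ s C hgood hsmall hJeq v hstalk e
  induction e using Sym2.ind with
  | _ x₀ y₀ =>
  intro hTwig I hIcard
  have hIS : WTree.Inv T (T.stageSet (n - k) s) := WTree.inv_stageSet T (n - k) s
  have hch := hgood.1.1
  have hCne := WTree.cherry_nonempty hgood
  obtain ⟨v₀, hst₀, hlf₀⟩ := hgood.2
  have hveq := WTree.stalk_unique hIS hch hCne hstalk hst₀
  subst hveq
  have hvS' : T.rleaf (T.stageSet (n - k) (s + 1)) v :=
    WTree.stalk_rleaf_pruneStage hIS hgood hsmall hstalk hlf₀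
  have hadj' : (T.restrictG (T.stageSet (n - k) (s + 1))).Adj x₀ y₀ := hTwig.1
  have hadjG : T.G.Adj x₀ y₀ := hadj'.1
  have heG : s(x₀, y₀) ∈ T.G.edgeSet := hadjG
  have hconn := T.isTree.isConnected
  -- the membership-side characterization
  have hside : ∀ i : Fin n, i ∈ J ↔
      (T.G.deleteEdges {s(x₀, y₀)}).Reachable (T.label i) v := by
    intro i
    rw [hJeq]
    exact ⟨fun h => WTree.hier_side_fwd hgood hsmall hstalk hTwig i h,
      fun h => WTree.hier_side_bwd hgood hsmall hstalk hvS' hTwig i h⟩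
  -- bridge/two-sidedness logic
  have hRside : ∀ a b : T.V, (T.G.deleteEdges {s(x₀, y₀)}).Reachable a b ↔
      ((T.G.deleteEdges {s(x₀, y₀)}).Reachable a v ↔
        (T.G.deleteEdges {s(x₀, y₀)}).Reachable b v) := by
    intro a b
    constructor
    · intro h
      exact ⟨fun ha => h.symm.trans ha, fun hb => h.trans hb⟩
    · intro h
      by_cases hav : (T.G.deleteEdges {s(x₀, y₀)}).Reachable a v
      · exact hav.trans (h.1 hav).symm
      · have hbv : ¬ (T.G.deleteEdges {s(x₀, y₀)}).Reachable b v :=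
          fun hb => hav (h.2 hb)
        rcases SGAux.side_total hconn (x₀ := x₀) (y₀ := y₀) v with hvx | hvy
        · rcases SGAux.side_total hconn (x₀ := x₀) (y₀ := y₀) a with hax | hay
          · exact absurd (hax.trans hvx.symm) hav
          · rcases SGAux.side_total hconn (x₀ := x₀) (y₀ := y₀) b with hbx | hby
            · exact absurd (hbx.trans hvx.symm) hbv
            · exact hay.trans hby.symm
        · rcases SGAux.side_total hconn (x₀ := x₀) (y₀ := y₀) a with hax | hay
          · rcases SGAux.side_total hconn (x₀ := x₀) (y₀ := y₀) b with hbx | hby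
            · exact hax.trans hbx.symm
            · exact absurd (hby.trans hvy.symm) hbv
          · exact absurd (hay.trans hvy.symm) hav
  constructor
  · rintro ⟨_, a, haI, b, hbI, hEB⟩
    have hEB' : ∀ p : T.G.Walk (T.label a) (T.label b), s(x₀, y₀) ∈ p.edges := hEB
    have hnr : ¬ (T.G.deleteEdges {s(x₀, y₀)}).Reachable (T.label a) (T.label b) :=
      (SGAux.edgeBetween_iff_not_reach hadjG).1 hEB'
    have hxor : ¬((T.G.deleteEdges {s(x₀, y₀)}).Reachable (T.label a) v ↔
        (T.G.deleteEdges {s(x₀, y₀)}).Reachable (T.label b) v) :=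
      fun h => hnr ((hRside _ _).2 h)
    by_cases hA : (T.G.deleteEdges {s(x₀, y₀)}).Reachable (T.label a) v
    · have hB := (not_iff.1 (fun h => hxor h.symm) : _).2 hA
      have haJ : a ∈ J := (hside a).2 hA
      have hbJ : b ∉ J := fun h => hB ((hside b).1 h)
      exact ⟨⟨a, Finset.mem_inter.2 ⟨haI, haJ⟩⟩, fun hsub => hbJ (hsub hbI)⟩
    · have hB := (not_iff.1 hxor).1 hA
      have hbJ : b ∈ J := (hside b).2 hB
      have haJ : a ∉ J := fun h => hA ((hside a).1 h)
      exact ⟨⟨b, Finset.mem_inter.2 ⟨hbI, hbJ⟩⟩, fun hsub => haJ (hsub haI)⟩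
  · rintro ⟨⟨a, haIJ⟩, hnsub⟩
    obtain ⟨b, hbI, hbJ⟩ := Finset.not_subset.1 hnsub
    have haI := (Finset.mem_inter.1 haIJ).1
    have haJ := (Finset.mem_inter.1 haIJ).2
    refine ⟨heG, a, haI, b, hbI, ?_⟩
    have : ¬ (T.G.deleteEdges {s(x₀, y₀)}).Reachable (T.label a) (T.label b) := by
      intro hr
      have hA : (T.G.deleteEdges {s(x₀, y₀)}).Reachable (T.label a) v := (hside a).1 haJ
      have hB : (T.G.deleteEdges {s(x₀, y₀)}).Reachable (T.label b) v := hr.symm.trans hA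
      exact hbJ ((hside b).2 hB)
    exact (SGAux.edgeBetween_iff_not_reach hadjG).2 this


end
end

section
/- Let n ∈ ℕ with n ≥ 3. Every pseudostar of kind (n,n−1) is a star, that is, it has exactly one node (vertex of degree greater than 2). -/
open scoped Classical
open Finset

noncomputable section

section AuxProof

open SimpleGraph

variable {V : Type} {G : SimpleGraph V}

private lemma aux_exists_walk_not_mem {x y : V} {e : Sym2 V}
    (h : (G \ fromEdgeSet {e}).Reachable x y) : ∃ p : G.Walk x y, e ∉ p.edges := by
  obtain ⟨p⟩ := h
  refine ⟨p.map (Hom.ofLE (by simp)), ?_⟩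
  simp_rw [Walk.edges_map, List.mem_map, Hom.ofLE_apply, Sym2.map_id', id]
  rintro ⟨e', h', rfl⟩
  simpa using p.edges_subset_edgeSet h'

private lemma aux_reach_of_walk {x y : V} {e : Sym2 V} {p : G.Walk x y}
    (hp : e ∉ p.edges) : (G \ fromEdgeSet {e}).Reachable x y := by
  refine ⟨p.transfer _ fun e' he' => ?_⟩
  simp only [edgeSet_sdiff, edgeSet_fromEdgeSet, edgeSet_sdiff_sdiff_isDiag, Set.mem_diff,
    Set.mem_singleton_iff]
  exact ⟨p.edges_subset_edgeSet he', fun h' => hp (h' ▸ he')⟩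

private lemma aux_side_aux {u v : V} : ∀ {x y : V} (_ : G.Walk x y),
    ((G \ fromEdgeSet {s(u,v)}).Reachable y u ∨ (G \ fromEdgeSet {s(u,v)}).Reachable y v) →
    ((G \ fromEdgeSet {s(u,v)}).Reachable x u ∨ (G \ fromEdgeSet {s(u,v)}).Reachable x v) := by
  intro x y p
  induction p with
  | nil => exact id
  | @cons a b c h q ih =>
    intro hy
    by_cases he : s(a, b) = s(u, v)
    · rw [Sym2.eq_iff] at he
      rcases he with ⟨h1, h2⟩ | ⟨h1, h2⟩
      · exact Or.inl (h1 ▸ Reachable.refl a)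
      · exact Or.inr (h1 ▸ Reachable.refl a)
    · have hadj : (G \ fromEdgeSet {s(u, v)}).Adj a b := by
        rw [sdiff_adj, fromEdgeSet_adj]
        exact ⟨h, fun hc => he hc.1⟩
      rcases ih hy with h1 | h1
      · exact Or.inl (hadj.reachable.trans h1)
      · exact Or.inr (hadj.reachable.trans h1)

private lemma aux_side (hG : G.Preconnected) (u v x : V) :
    (G \ fromEdgeSet {s(u,v)}).Reachable x u ∨ (G \ fromEdgeSet {s(u,v)}).Reachable x v := by
  obtain ⟨p⟩ := hG x v
  exact aux_side_aux p (Or.inr (Reachable.refl _))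

private lemma aux_bridge (hT : G.IsAcyclic) {u v : V} (h : G.Adj u v) :
    ¬ (G \ fromEdgeSet {s(u,v)}).Reachable u v :=
  isBridge_iff.mp ((isAcyclic_iff_forall_adj_isBridge.mp hT) h)

private lemma aux_mindeg [Fintype V] (hc : G.Preconnected) (h2 : 2 ≤ Fintype.card V) (x : V) :
    1 ≤ G.degree x := by
  classical
  obtain ⟨y, hy⟩ := Fintype.exists_ne_of_one_lt_card (by omega) x
  obtain ⟨p⟩ := hc x y
  cases p with
  | nil => exact absurd rfl hy
  | cons h q => exact (G.degree_pos_iff_exists_adj x).mpr ⟨_, h⟩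

private lemma aux_ncard_deg {n : ℕ} (T : WTree (Fin n)) (x : T.V) :
    (T.G.neighborSet x).ncard = T.G.degree x := by
  rw [Set.ncard_eq_toFinset_card', Set.toFinset_card, SimpleGraph.card_neighborSet_eq_degree]

private lemma aux_side_mem {n : ℕ} (T : WTree (Fin n)) {u v : T.V} (huv : T.G.Adj u v)
    (i : Fin n) :
    i ∈ T.sideLeaves u v ↔
      (T.G \ SimpleGraph.fromEdgeSet {s(u,v)}).Reachable (T.label i) u := by
  rw [WTree.sideLeaves, Finset.mem_filter]
  simp only [Finset.mem_univ, true_and]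
  constructor
  · intro hb
    rcases aux_side T.isTree.isConnected.preconnected u v (T.label i) with h | h
    · exact h
    · exfalso
      obtain ⟨p, hp⟩ := aux_exists_walk_not_mem h
      exact hp (hb p)
  · intro h p
    by_contra hep
    exact aux_bridge T.isTree.IsAcyclic huv (h.symm.trans (aux_reach_of_walk hep))

private lemma aux_side_card {n : ℕ} (T : WTree (Fin n)) {u v : T.V} (huv : T.G.Adj u v) :
    (T.sideLeaves u v).card + (T.sideLeaves v u).card = n := by
  classical
  have key : ∀ i : Fin n, i ∈ T.sideLeaves v u ↔
      ¬ (T.G \ SimpleGraph.fromEdgeSet {s(u,v)}).Reachable (T.label i) u := by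
    intro i
    rw [show (s(u,v) : Sym2 T.V) = s(v,u) from Sym2.eq_swap, aux_side_mem T huv.symm i]
    constructor
    · intro h hcon
      exact aux_bridge T.isTree.IsAcyclic huv.symm (h.symm.trans hcon)
    · intro h
      rcases aux_side T.isTree.isConnected.preconnected v u (T.label i) with h1 | h1
      · exact h1
      · exact absurd h1 h
  have h1 : T.sideLeaves u v = Finset.univ.filter
      (fun i => (T.G \ SimpleGraph.fromEdgeSet {s(u,v)}).Reachable (T.label i) u) := by
    ext i
    simp [aux_side_mem T huv i]
  have h2 : T.sideLeaves v u = Finset.univ.filter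
      (fun i => ¬ (T.G \ SimpleGraph.fromEdgeSet {s(u,v)}).Reachable (T.label i) u) := by
    ext i
    simp [key i]
  rw [h1, h2, Finset.card_filter_add_card_filter_not, Finset.card_univ,
    Fintype.card_fin]

private lemma aux_count {V : Type} [Fintype V] {G : SimpleGraph V} (S : Set V)
    {u v w : V} (huv : G.Adj u v) (huS : u ∈ S) (hvS : v ∉ S) (hwS : w ∈ S)
    (hcl : ∀ x ∈ S, ∀ y : V, G.Adj x y → (x = u ∧ y = v) ∨ y ∈ S)
    (hconn : (G.induce S).Connected) (hacyc : G.IsAcyclic)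
    (hdegw : 2 < G.degree w) (hmin : ∀ x : V, 1 ≤ G.degree x)
    (Lf0 : Finset V) (hLf0 : ∀ x : V, x ∈ Lf0 ↔ x ∈ S ∧ G.degree x = 1) :
    2 ≤ Lf0.card := by
  classical
  have hLfeq : Lf0 = S.toFinset.filter (fun x => G.degree x = 1) := by
    ext x
    simp [Finset.mem_filter, Set.mem_toFinset, hLf0]
  rw [hLfeq]
  set H : SimpleGraph ↥S := G.induce S with hHdef
  have hHacyc : H.IsAcyclic := by
    intro x c hc
    exact hacyc (c.map (SimpleGraph.Embedding.induce (G := G) S).toHom)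
      ((Walk.map_isCycle_iff_of_injective
        (SimpleGraph.Embedding.induce (G := G) S).injective).mpr hc)
  have hHtree : H.IsTree := ⟨hconn, hHacyc⟩
  have hdeg_ne : ∀ (x : ↥S), x.1 ≠ u → H.degree x = G.degree x.1 := by
    intro x hxu
    rw [← SimpleGraph.card_neighborSet_eq_degree, ← SimpleGraph.card_neighborSet_eq_degree]
    have hmemS : ∀ {y : V}, G.Adj x.1 y → y ∈ S := by
      intro y hy
      rcases hcl x.1 x.2 y hy with ⟨h1, _⟩ | h
      · exact absurd h1 hxu
      · exact h
    exact Fintype.card_congr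
      ⟨fun y => ⟨y.1.1, by exact y.2⟩, fun y => ⟨⟨y.1, hmemS y.2⟩, by exact y.2⟩,
        fun _ => rfl, fun _ => rfl⟩
  have hdeg_u : H.degree ⟨u, huS⟩ + 1 = G.degree u := by
    have hvmem : v ∈ G.neighborFinset u := (G.mem_neighborFinset u v).mpr huv
    have hcard : (H.neighborFinset ⟨u, huS⟩).card = ((G.neighborFinset u).erase v).card := by
      apply Finset.card_bij (fun (y : ↥S) _ => y.1)
      · intro y hy
        rw [SimpleGraph.mem_neighborFinset] at hy
        rw [Finset.mem_erase, SimpleGraph.mem_neighborFinset]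
        refine ⟨fun h => hvS (h ▸ y.2), by exact hy⟩
      · intro a _ b _ hab
        exact Subtype.ext hab
      · intro y hy
        rw [Finset.mem_erase, SimpleGraph.mem_neighborFinset] at hy
        have hyS : y ∈ S := by
          rcases hcl u huS y hy.2 with ⟨_, h2⟩ | h
          · exact absurd h2 hy.1
          · exact h
        exact ⟨⟨y, hyS⟩, (SimpleGraph.mem_neighborFinset _ _ _).mpr (by exact hy.2), rfl⟩
    have e3 : H.degree ⟨u, huS⟩ = ((G.neighborFinset u).erase v).card := hcard
    rw [Finset.card_erase_of_mem hvmem] at e3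
    have e4 : G.degree u = (G.neighborFinset u).card := rfl
    have e5 : 1 ≤ (G.neighborFinset u).card := Finset.card_pos.mpr ⟨v, hvmem⟩
    omega
  have hsum1 : ∑ x : ↥S, H.degree x + 2 = 2 * Fintype.card ↥S := by
    rw [SimpleGraph.sum_degrees_eq_twice_card_edges]
    have := hHtree.card_edgeFinset
    omega
  have hsum2 : ∑ x ∈ S.toFinset, G.degree x + 1 = 2 * S.toFinset.card := by
    have e1 : ∑ x ∈ S.toFinset, G.degree x = ∑ x : ↥S, G.degree x.1 :=
      Finset.sum_subtype S.toFinset (fun x => Set.mem_toFinset) _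
    have e2 : ∑ x : ↥S, H.degree x + 1 = ∑ x : ↥S, G.degree x.1 := by
      have hA : H.degree ⟨u, huS⟩ + ∑ x ∈ Finset.univ.erase (⟨u, huS⟩ : ↥S), H.degree x =
          ∑ x : ↥S, H.degree x :=
        Finset.add_sum_erase _ (fun x : ↥S => H.degree x) (Finset.mem_univ _)
      have hB : G.degree u + ∑ x ∈ Finset.univ.erase (⟨u, huS⟩ : ↥S), G.degree x.1 =
          ∑ x : ↥S, G.degree x.1 := by
        have := Finset.add_sum_erase Finset.univ (fun x : ↥S => G.degree x.1)
          (Finset.mem_univ (⟨u, huS⟩ : ↥S))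
        simpa using this
      have hrest : ∑ x ∈ Finset.univ.erase (⟨u, huS⟩ : ↥S), H.degree x =
          ∑ x ∈ Finset.univ.erase (⟨u, huS⟩ : ↥S), G.degree x.1 := by
        refine Finset.sum_congr rfl fun x hx => hdeg_ne x fun h => ?_
        exact (Finset.mem_erase.mp hx).1 (Subtype.ext h)
      omega
    rw [e1, Set.toFinset_card]
    omega
  set F := S.toFinset with hF
  set Lf := F.filter (fun x => G.degree x = 1) with hLf
  set Bf := F.filter (fun x => ¬ G.degree x = 1) with hBf
  have hLB : Lf.card + Bf.card = F.card := Finset.card_filter_add_card_filter_not _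
  have hsplit : ∑ x ∈ F, G.degree x = ∑ x ∈ Lf, G.degree x + ∑ x ∈ Bf, G.degree x :=
    (Finset.sum_filter_add_sum_filter_not F _ _).symm
  have hLsum : ∑ x ∈ Lf, G.degree x = Lf.card := by
    rw [Finset.card_eq_sum_ones]
    exact Finset.sum_congr rfl fun x hx => (Finset.mem_filter.mp hx).2
  have hwB : w ∈ Bf := Finset.mem_filter.mpr ⟨Set.mem_toFinset.mpr hwS, by omega⟩
  have hBsum : G.degree w + ∑ x ∈ Bf.erase w, G.degree x = ∑ x ∈ Bf, G.degree x :=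
    Finset.add_sum_erase _ (fun x => G.degree x) hwB
  have hBrest : 2 * (Bf.erase w).card ≤ ∑ x ∈ Bf.erase w, G.degree x := by
    have h := Finset.card_nsmul_le_sum (Bf.erase w) (fun x => G.degree x) 2 ?_
    · rw [smul_eq_mul] at h
      omega
    · intro x hx
      have h1 := (Finset.mem_filter.mp (Finset.mem_of_mem_erase hx)).2
      have h2 := hmin x
      show 2 ≤ G.degree x
      omega
  have hce : (Bf.erase w).card = Bf.card - 1 := Finset.card_erase_of_mem hwB
  have hb1 : 1 ≤ Bf.card := Finset.card_pos.mpr ⟨w, hwB⟩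
  omega

private lemma aux_node_side {n : ℕ} (hn : 2 ≤ n) (T : WTree (Fin n)) {u v w : T.V}
    (huv : T.G.Adj u v) (hw : T.IsNode w)
    (hwu : (T.G \ SimpleGraph.fromEdgeSet {s(u,v)}).Reachable w u) :
    2 ≤ (T.sideLeaves u v).card := by
  classical
  set S : Set T.V := {x | (T.G \ SimpleGraph.fromEdgeSet {s(u,v)}).Reachable x u} with hSdef
  have hbr : ¬ (T.G \ SimpleGraph.fromEdgeSet {s(u,v)}).Reachable u v :=
    aux_bridge T.isTree.IsAcyclic huv
  have huS : u ∈ S := Reachable.refl u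
  have hvS : v ∉ S := fun h => hbr h.symm
  have hwS : w ∈ S := hwu
  have hcl : ∀ x ∈ S, ∀ y : T.V, T.G.Adj x y → (x = u ∧ y = v) ∨ y ∈ S := by
    intro x hx y hxy
    by_cases he : s(x, y) = (s(u, v) : Sym2 T.V)
    · rw [Sym2.eq_iff] at he
      rcases he with ⟨h1, h2⟩ | ⟨h1, h2⟩
      · exact Or.inl ⟨h1, h2⟩
      · exact absurd (h1 ▸ hx) hvS
    · refine Or.inr ?_
      have hadj : (T.G \ SimpleGraph.fromEdgeSet {s(u, v)}).Adj x y := by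
        rw [sdiff_adj, fromEdgeSet_adj]
        exact ⟨hxy, fun hc => he hc.1⟩
      exact hadj.symm.reachable.trans hx
  have hstep : ∀ (x y : T.V) (_ : (T.G \ SimpleGraph.fromEdgeSet {s(u,v)}).Walk x y)
      (hy : y ∈ S) (hx : x ∈ S), (T.G.induce S).Reachable ⟨x, hx⟩ ⟨y, hy⟩ := by
    intro x y p
    induction p with
    | nil => intro hy hx; exact Reachable.refl _
    | @cons a b c hab q ih =>
      intro hy hx
      have hbS : b ∈ S := hab.symm.reachable.trans hx
      have hadj : (T.G.induce S).Adj ⟨a, hx⟩ ⟨b, hbS⟩ := by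
        exact ((SimpleGraph.sdiff_adj _ _ _ _).mp hab).1
      exact hadj.reachable.trans (ih hy hbS)
  have hlift : ∀ (x : T.V) (hx : x ∈ S), (T.G.induce S).Reachable ⟨x, hx⟩ ⟨u, huS⟩ := by
    intro x hx
    have hx' := hx
    obtain ⟨p⟩ := hx'
    exact hstep x u p huS hx
  have hHconn : (T.G.induce S).Connected := by
    haveI : Nonempty ↥S := ⟨⟨u, huS⟩⟩
    exact ⟨fun a b => (hlift a.1 a.2).trans (hlift b.1 b.2).symm⟩
  have hcard2 : 2 ≤ Fintype.card T.V := by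
    have := Fintype.card_le_of_injective T.label T.label_inj
    rw [Fintype.card_fin] at this
    omega
  have hdegw : 2 < T.G.degree w := by
    have := hw
    rwa [WTree.IsNode, aux_ncard_deg] at this
  have hmin : ∀ x : T.V, 1 ≤ T.G.degree x :=
    fun x => aux_mindeg T.isTree.isConnected.preconnected hcard2 x
  have himg : ∀ x : T.V, x ∈ (T.sideLeaves u v).image T.label ↔
      x ∈ S ∧ T.G.degree x = 1 := by
    intro x
    constructor
    · intro hx
      rw [Finset.mem_image] at hx
      obtain ⟨i, hi, rfl⟩ := hx
      refine ⟨(aux_side_mem T huv i).mp hi, ?_⟩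
      rw [← aux_ncard_deg]
      exact (T.leaf_iff _).mpr ⟨i, rfl⟩
    · rintro ⟨h1, h2⟩
      obtain ⟨i, rfl⟩ := (T.leaf_iff x).mp (by rw [aux_ncard_deg]; exact h2)
      exact Finset.mem_image.mpr ⟨i, (aux_side_mem T huv i).mpr h1, rfl⟩
  have hkey := aux_count S huv huS hvS hwS hcl hHconn T.isTree.IsAcyclic hdegw hmin
    ((T.sideLeaves u v).image T.label) himg
  rwa [Finset.card_image_of_injective _ T.label_inj] at hkey

private lemma aux_exists_node {n : ℕ} (hn : 3 ≤ n) (T : WTree (Fin n)) :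
    ∃ w : T.V, T.IsNode w := by
  classical
  by_contra hno
  push_neg at hno
  have hdeg2 : ∀ x : T.V, T.G.degree x ≤ 2 := by
    intro x
    have := hno x
    rw [WTree.IsNode, aux_ncard_deg] at this
    omega
  have hcardV : n ≤ Fintype.card T.V := by
    have := Fintype.card_le_of_injective T.label T.label_inj
    rwa [Fintype.card_fin] at this
  set Lf := Finset.univ.filter (fun x : T.V => T.G.degree x = 1) with hLf
  set Bf := Finset.univ.filter (fun x : T.V => ¬ T.G.degree x = 1) with hBf
  have hLcard : Lf.card = n := by
    have hb : (Finset.univ : Finset (Fin n)).card = Lf.card := by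
      apply Finset.card_bij (fun (i : Fin n) _ => T.label i)
      · intro i _
        refine Finset.mem_filter.mpr ⟨Finset.mem_univ _, ?_⟩
        rw [← aux_ncard_deg]
        exact (T.leaf_iff (T.label i)).mpr ⟨i, rfl⟩
      · intro a _ b _ hab
        exact T.label_inj hab
      · intro x hx
        obtain ⟨i, rfl⟩ := (T.leaf_iff x).mp
          (by rw [aux_ncard_deg]; exact (Finset.mem_filter.mp hx).2)
        exact ⟨i, Finset.mem_univ _, rfl⟩
    simpa using hb.symm
  have hsum : ∑ x : T.V, T.G.degree x + 2 = 2 * Fintype.card T.V := by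
    rw [SimpleGraph.sum_degrees_eq_twice_card_edges]
    have := T.isTree.card_edgeFinset
    omega
  have hLB : Lf.card + Bf.card = Fintype.card T.V := by
    rw [← Finset.card_univ]
    exact Finset.card_filter_add_card_filter_not _
  have hsplit : ∑ x : T.V, T.G.degree x =
      ∑ x ∈ Lf, T.G.degree x + ∑ x ∈ Bf, T.G.degree x :=
    (Finset.sum_filter_add_sum_filter_not Finset.univ _ _).symm
  have hLsum : ∑ x ∈ Lf, T.G.degree x = Lf.card := by
    rw [Finset.card_eq_sum_ones]
    exact Finset.sum_congr rfl fun x hx => (Finset.mem_filter.mp hx).2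
  have hBsum : ∑ x ∈ Bf, T.G.degree x ≤ 2 * Bf.card := by
    have h := Finset.sum_le_card_nsmul Bf (fun x => T.G.degree x) 2 fun x _ => hdeg2 x
    rwa [smul_eq_mul, mul_comm] at h
  omega

end AuxProof

/-- **Remark (i).** A pseudostar of kind `(n, n-1)` is a star, i.e. a tree with
exactly one node. -/
theorem pseudostar_kind_n_sub_one_is_star (n : ℕ) (hn : 3 ≤ n)
    (T : WTree (Fin n)) (hps : T.IsPseudostar (n - 1)) :
    ∃! v : T.V, T.IsNode v := by
  classical
  obtain ⟨w, hw⟩ := aux_exists_node hn T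
  refine ⟨w, hw, ?_⟩
  intro y hy
  by_contra hne
  obtain ⟨p, hp, -⟩ := T.isTree.existsUnique_path y w
  cases p with
  | nil => exact hne rfl
  | @cons _ c _ h q =>
    have hqp := (SimpleGraph.Walk.cons_isPath_iff h q).mp hp
    have hnotedge : (s(y,c) : Sym2 T.V) ∉ q.edges := fun he =>
      hqp.2 (q.fst_mem_support_of_mem_edges he)
    have hr : (T.G \ SimpleGraph.fromEdgeSet {s(c,y)}).Reachable w c := by
      apply aux_reach_of_walk (p := q.reverse)
      rw [SimpleGraph.Walk.edges_reverse, List.mem_reverse, Sym2.eq_swap]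
      exact hnotedge
    have h2 : 2 ≤ (T.sideLeaves y c).card :=
      aux_node_side (by omega) T h hy (SimpleGraph.Reachable.refl y)
    have h3 : 2 ≤ (T.sideLeaves c y).card :=
      aux_node_side (by omega) T h.symm hw hr
    have h4 := aux_side_card T h
    have h5 := hps y c h
    omega

end
end
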